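/- arXiv:1001.4987 — 5 statements merged into one kernel-verified Lean document; each statement's English description precedes it below -/
import Mathlib

section
/- Let R and R' be Boolean relations (not necessarily distinct) such that R_OR ≤ppp R and R_NAND ≤ppp R'. Then the constraint language {R, R'} 3-simulates equality. -/
/-- A Boolean relation of arity `r`: a set of bit-tuples of length `r`. -/
abbrev BoolRel (r : ℕ) := Set (Fin r → Bool)

/-- The unary constant relation `{0}`. -/
def Rzero : BoolRel 1 := {a | a 0 = false}

/-- The unary constant relation `{1}`. -/
def Rone : BoolRel 1 := {a | a 0 = true}

/-- A constraint over a variable set `V`: a Boolean relation together with a scope. -/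
structure Constraint (V : Type) where
  arity : ℕ
  rel : BoolRel arity
  scope : Fin arity → V

/-- An assignment satisfies a constraint if the scoped tuple lies in the relation. -/
def Constraint.sat {V : Type} (c : Constraint V) (σ : V → Bool) : Prop :=
  (fun i => σ (c.scope i)) ∈ c.rel

/-- A CSP instance: a collection of constraints over a variable set `V`. -/
structure CSPInstance (V : Type) where
  constraints : List (Constraint V)

/-- An assignment satisfies an instance if it satisfies every constraint. -/
def CSPInstance.sat {V : Type} (I : CSPInstance V) (σ : V → Bool) : Prop :=
  ∀ c ∈ I.constraints, c.sat σ

/-- An instance is over the constraint language `Γ` if every constraint uses a relation of `Γ`. -/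
def CSPInstance.over {V : Type} (I : CSPInstance V) (Γ : Set (Σ r, BoolRel r)) : Prop :=
  ∀ c ∈ I.constraints, (⟨c.arity, c.rel⟩ : Σ r, BoolRel r) ∈ Γ

/-- The degree of a variable: the number of occurrences among the scopes of the constraints. -/
def varDegree {V : Type} [DecidableEq V] (I : CSPInstance V) (v : V) : ℕ :=
  (I.constraints.map fun c => (Finset.univ.filter fun i => c.scope i = v).card).sum

/-- The language `{R_zero, R_one}` of pins. -/
def pinLang : Set (Σ r, BoolRel r) := {⟨1, Rzero⟩, ⟨1, Rone⟩}

/-- `Γ` `d`-simulates the `k`-ary equality relation. -/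
def simulatesEqK (Γ : Set (Σ r, BoolRel r)) (d k : ℕ) : Prop :=
  ∃ (ℓ : ℕ), k ≤ ℓ ∧ ∃ I : CSPInstance (Fin ℓ),
    I.over (Γ ∪ pinLang) ∧
    (∀ v : Fin ℓ, varDegree I v ≤ d) ∧
    (∀ v : Fin ℓ, (v : ℕ) < k → varDegree I v ≤ d - 1) ∧
    ∃ m : ℕ, 1 ≤ m ∧
      Nat.card {σ : Fin ℓ → Bool | I.sat σ ∧ ∀ v : Fin ℓ, (v : ℕ) < k → σ v = false} = m ∧
      Nat.card {σ : Fin ℓ → Bool | I.sat σ ∧ ∀ v : Fin ℓ, (v : ℕ) < k → σ v = true} = m ∧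
      (∀ σ : Fin ℓ → Bool, I.sat σ →
        (∀ v : Fin ℓ, (v : ℕ) < k → σ v = false) ∨ (∀ v : Fin ℓ, (v : ℕ) < k → σ v = true))

/-- `Γ` `d`-simulates equality: it `d`-simulates `Eq_k` for every `k ≥ 2`. -/
def simulatesEq (Γ : Set (Σ r, BoolRel r)) (d : ℕ) : Prop :=
  ∀ k : ℕ, 2 ≤ k → simulatesEqK Γ d k

/-- A single relation `d`-simulates equality if the language `{R}` does. -/
def relSimulatesEq {r : ℕ} (R : BoolRel r) (d : ℕ) : Prop :=
  simulatesEq {⟨r, R⟩} d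

/-- OR-conj relations: definable by a conjunction of pins and ORs (of any arity ≥ 1). -/
def ORConj {r : ℕ} (R : BoolRel r) : Prop :=
  ∃ (P : Set (Fin r × Bool)) (Cl : Set (Set (Fin r))),
    (∀ C ∈ Cl, C.Nonempty) ∧
    ∀ a : Fin r → Bool, a ∈ R ↔
      ((∀ p ∈ P, a p.1 = p.2) ∧ (∀ C ∈ Cl, ∃ i ∈ C, a i = true))

/-- NAND-conj relations: definable by a conjunction of pins and NANDs (of any arity ≥ 1). -/
def NANDConj {r : ℕ} (R : BoolRel r) : Prop :=
  ∃ (P : Set (Fin r × Bool)) (Cl : Set (Set (Fin r))),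
    (∀ C ∈ Cl, C.Nonempty) ∧
    ∀ a : Fin r → Bool, a ∈ R ↔
      ((∀ p ∈ P, a p.1 = p.2) ∧ (∀ C ∈ Cl, ∃ i ∈ C, a i = false))

/-- One step of ppp-definability: permutation of columns, pinning, or projection. -/
inductive pppStep : (Σ r, BoolRel r) → (Σ r, BoolRel r) → Prop
  | perm {r : ℕ} (R : BoolRel r) (π : Equiv.Perm (Fin r)) :
      pppStep ⟨r, R⟩ ⟨r, {a | (fun i => a (π i)) ∈ R}⟩
  | pin {r : ℕ} (R : BoolRel r) (i : Fin r) (c : Bool) :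
      pppStep ⟨r, R⟩ ⟨r, {a | a ∈ R ∧ a i = c}⟩
  | proj {r : ℕ} (R : BoolRel (r + 1)) (i : Fin (r + 1)) :
      pppStep ⟨r + 1, R⟩ ⟨r, {a | ∃ b ∈ R, a = fun j => b (i.succAbove j)}⟩

/-- `R ≤ppp R'`: `R` is obtained from `R'` by a sequence of ppp operations. -/
def pppLE {r r' : ℕ} (R : BoolRel r) (R' : BoolRel r') : Prop :=
  Relation.ReflTransGen pppStep ⟨r', R'⟩ ⟨r, R⟩

def Req : BoolRel 2 := {a | a 0 = a 1}
def Rneq : BoolRel 2 := {a | a 0 ≠ a 1}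
def Rimp : BoolRel 2 := {a | a 0 = true → a 1 = true}
def ROR : BoolRel 2 := {a | a 0 = true ∨ a 1 = true}
def RNAND : BoolRel 2 := {a | a 0 = false ∨ a 1 = false}
def ORk (k : ℕ) : BoolRel k := {a | ∃ i, a i = true}
def NANDk (k : ℕ) : BoolRel k := {a | ∃ i, a i = false}

/-- `R₀ + R₁ = {0a : a ∈ R₀} ∪ {1a : a ∈ R₁}`. -/
def relSum {r : ℕ} (R0 R1 : BoolRel r) : BoolRel (r + 1) :=
  {a | (a 0 = false ∧ (fun i => a i.succ) ∈ R0) ∨ (a 0 = true ∧ (fun i => a i.succ) ∈ R1)}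

/-- Column `i` of `R` is constant. -/
def constCol {r : ℕ} (R : BoolRel r) (i : Fin r) : Prop :=
  ∀ a ∈ R, ∀ b ∈ R, a i = b i


/-- Affine relations: solution sets of systems of linear equations over GF(2). -/
def AffineRel {r : ℕ} (R : BoolRel r) : Prop :=
  ∃ E : Set (Finset (Fin r) × Bool),
    ∀ a : Fin r → Bool, a ∈ R ↔
      ∀ e ∈ E, (∑ i ∈ e.1, (if a i then (1 : ZMod 2) else 0)) = (if e.2 then (1 : ZMod 2) else 0)

/-- IM-conj relations: definable by a conjunction of pins and binary implications. -/
def IMConj {r : ℕ} (R : BoolRel r) : Prop :=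
  ∃ (P : Set (Fin r × Bool)) (Imp : Set (Fin r × Fin r)),
    ∀ a : Fin r → Bool, a ∈ R ↔
      ((∀ p ∈ P, a p.1 = p.2) ∧ (∀ q ∈ Imp, a q.1 = true → a q.2 = true))

/-- Pointwise order on bit-tuples. -/
def leTuple {r : ℕ} (a b : Fin r → Bool) : Prop := ∀ i, a i = true → b i = true

/-- A relation is monotone if it is upward closed. -/
def MonotoneRel {r : ℕ} (R : BoolRel r) : Prop := ∀ a ∈ R, ∀ b, leTuple a b → b ∈ R

/-- A relation is antitone if it is downward closed. -/
def AntitoneRel {r : ℕ} (R : BoolRel r) : Prop := ∀ a ∈ R, ∀ b, leTuple b a → b ∈ R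

/-- Pseudo-monotone: the restriction to non-constant columns is monotone. -/
def PseudoMonotone {r : ℕ} (R : BoolRel r) : Prop :=
  ∀ a ∈ R, ∀ b : Fin r → Bool,
    (∀ i, constCol R i → b i = a i) →
    (∀ i, ¬ constCol R i → a i = true → b i = true) → b ∈ R

/-- Pseudo-antitone: the restriction to non-constant columns is antitone. -/
def PseudoAntitone {r : ℕ} (R : BoolRel r) : Prop :=
  ∀ a ∈ R, ∀ b : Fin r → Bool,
    (∀ i, constCol R i → b i = a i) →
    (∀ i, ¬ constCol R i → b i = true → a i = true) → b ∈ R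

/-- Bit-wise complement of a relation. -/
def bwcomp {r : ℕ} (R : BoolRel r) : BoolRel r := {a | (fun i => !(a i)) ∈ R}

/-- `(P, Cl)` is a normalized OR-conj formula defining `R`: pins `P`, OR-clauses `Cl`
(distinct arguments, size ≥ 2, no pinned variable in a clause, antichain of clauses). -/
def NormalizedOR {r : ℕ} (R : BoolRel r) (P : Set (Fin r × Bool))
    (Cl : Set (Finset (Fin r))) : Prop :=
  (∀ a : Fin r → Bool, a ∈ R ↔
      ((∀ p ∈ P, a p.1 = p.2) ∧ (∀ C ∈ Cl, ∃ i ∈ C, a i = true))) ∧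
  (∀ p ∈ P, ∀ C ∈ Cl, p.1 ∉ C) ∧
  (∀ C ∈ Cl, 2 ≤ C.card) ∧
  (∀ C ∈ Cl, ∀ C' ∈ Cl, C ⊆ C' → C = C')

/-- `(P, Cl)` is a normalized NAND-conj formula defining `R`. -/
def NormalizedNAND {r : ℕ} (R : BoolRel r) (P : Set (Fin r × Bool))
    (Cl : Set (Finset (Fin r))) : Prop :=
  (∀ a : Fin r → Bool, a ∈ R ↔
      ((∀ p ∈ P, a p.1 = p.2) ∧ (∀ C ∈ Cl, ∃ i ∈ C, a i = false))) ∧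
  (∀ p ∈ P, ∀ C ∈ Cl, p.1 ∉ C) ∧
  (∀ C ∈ Cl, 2 ≤ C.card) ∧
  (∀ C ∈ Cl, ∀ C' ∈ Cl, C ⊆ C' → C = C')

section Aux

/-- A gadget realizing binary relation `S` from `R` with pins. -/
structure PGadget (r : ℕ) (R : BoolRel r) (S : BoolRel 2) where
  φ : Fin 2 → Fin r
  inj : Function.Injective φ
  pin : Fin r → Option Bool
  pfree : ∀ m : Fin 2, pin (φ m) = none
  spec : ∀ a : Fin 2 → Bool, a ∈ S ↔
    ∃ b ∈ R, (∀ (j : Fin r) (c : Bool), pin j = some c → b j = c) ∧ ∀ m : Fin 2, b (φ m) = a m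

lemma nf_of_rtg {r : ℕ} {R : BoolRel r} {X : Σ n, BoolRel n}
    (h : Relation.ReflTransGen pppStep ⟨r, R⟩ X) :
    ∃ (φ : Fin X.1 → Fin r) (P : Set (Fin r × Bool)), Function.Injective φ ∧
      ∀ a, a ∈ X.2 ↔ ∃ b ∈ R, (∀ pr ∈ P, b pr.1 = pr.2) ∧ ∀ j, b (φ j) = a j := by
  induction h with
  | refl =>
      refine ⟨id, ∅, Function.injective_id, fun a => ⟨fun ha => ⟨a, ha, by simp, fun j => rfl⟩, ?_⟩⟩
      rintro ⟨b, hb, -, hba⟩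
      have : b = a := funext fun j => hba j
      exact this ▸ hb
  | tail hrt hstep ih =>
      obtain ⟨φ, P, hφ, hspec⟩ := ih
      cases hstep with
      | perm S π =>
          refine ⟨φ ∘ π.symm, P, hφ.comp π.symm.injective, fun a => ?_⟩
          constructor
          · intro ha
            obtain ⟨b, hb, hp, hba⟩ := (hspec _).1 ha
            exact ⟨b, hb, hp, fun j => by simpa using hba (π.symm j)⟩
          · rintro ⟨b, hb, hp, hba⟩
            refine (hspec (fun i => a (π i))).2 ⟨b, hb, hp, fun j => ?_⟩
            simpa using hba (π j)
      | pin S i c =>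
          refine ⟨φ, insert (φ i, c) P, hφ, fun a => ?_⟩
          constructor
          · rintro ⟨ha, hac⟩
            obtain ⟨b, hb, hp, hba⟩ := (hspec _).1 ha
            refine ⟨b, hb, ?_, hba⟩
            rintro pr (rfl | hpr)
            · simpa [hba i] using hac
            · exact hp pr hpr
          · rintro ⟨b, hb, hp, hba⟩
            refine ⟨(hspec _).2 ⟨b, hb, fun pr hpr => hp pr (Set.mem_insert_iff.2 (Or.inr hpr)), hba⟩, ?_⟩
            have h2 := hp (φ i, c) (Set.mem_insert _ _)
            rw [← hba i]; exact h2
      | proj S i =>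
          refine ⟨φ ∘ i.succAbove, P, hφ.comp (Fin.succAbove_right_injective), fun a => ?_⟩
          constructor
          · rintro ⟨b, hb, rfl⟩
            obtain ⟨cc, hc, hp, hcb⟩ := (hspec _).1 hb
            exact ⟨cc, hc, hp, fun j => hcb (i.succAbove j)⟩
          · rintro ⟨cc, hc, hp, hca⟩
            refine ⟨fun j => cc (φ j), (hspec _).2 ⟨cc, hc, hp, fun j => rfl⟩, ?_⟩
            funext j
            exact (hca j).symm

lemma gadget_exists {r : ℕ} {R : BoolRel r} {S : BoolRel 2}
    (h : pppLE S R) (htu : ∀ (m : Fin 2) (c : Bool), ∃ a ∈ S, a m = c) :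
    Nonempty (PGadget r R S) := by
  obtain ⟨φ, P, hφ, hspec⟩ := nf_of_rtg (X := ⟨2, S⟩) h
  classical
  -- pins are functional on coordinates, since S is nonempty
  obtain ⟨a₀, ha₀, -⟩ := htu 0 true
  obtain ⟨b₀, hb₀, hp₀, -⟩ := (hspec a₀).1 ha₀
  have hfun : ∀ j c c', (j, c) ∈ P → (j, c') ∈ P → c = c' := by
    intro j c c' h1 h2
    have e1 := hp₀ (j, c) h1
    have e2 := hp₀ (j, c') h2
    simp only at e1 e2
    exact e1 ▸ e2 ▸ rfl
  set p : Fin r → Option Bool := fun j =>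
    if hj : ∃ c, (j, c) ∈ P then some (Classical.choose hj) else none with hp
  have hpiff : ∀ j c, p j = some c ↔ (j, c) ∈ P := by
    intro j c
    constructor
    · intro hjc
      by_cases hj : ∃ c, (j, c) ∈ P
      · have heq : p j = some (Classical.choose hj) := dif_pos hj
        rw [heq] at hjc
        exact (Option.some_inj.1 hjc) ▸ Classical.choose_spec hj
      · have heq : p j = none := dif_neg hj
        rw [heq] at hjc; exact absurd hjc (by simp)
    · intro hjc
      have hj : ∃ c', (j, c') ∈ P := ⟨c, hjc⟩
      have heq : p j = some (Classical.choose hj) := dif_pos hj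
      rw [heq, Option.some_inj]
      exact (hfun j _ _ (Classical.choose_spec hj) hjc)
  have hpins : ∀ b : Fin r → Bool,
      (∀ pr ∈ P, b pr.1 = pr.2) ↔ (∀ j c, p j = some c → b j = c) := by
    intro b
    constructor
    · intro hb j c hjc
      exact hb (j, c) ((hpiff j c).1 hjc)
    · rintro hb ⟨j, c⟩ hjc
      exact hb j c ((hpiff j c).2 hjc)
  have hspec' : ∀ a : Fin 2 → Bool, a ∈ S ↔
      ∃ b ∈ R, (∀ j c, p j = some c → b j = c) ∧ ∀ m : Fin 2, b (φ m) = a m := by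
    intro a
    rw [hspec a]
    constructor
    · rintro ⟨b, hb, hbp, hba⟩; exact ⟨b, hb, (hpins b).1 hbp, hba⟩
    · rintro ⟨b, hb, hbp, hba⟩; exact ⟨b, hb, (hpins b).2 hbp, hba⟩
  refine ⟨⟨φ, hφ, p, ?_, hspec'⟩⟩
  intro m
  cases hpm : p (φ m) with
  | none => rfl
  | some c =>
      exfalso
      obtain ⟨a₁, ha₁, ha₁m⟩ := htu m (!c)
      obtain ⟨b₁, hb₁, hbp₁, hba₁⟩ := (hspec' a₁).1 ha₁
      have : b₁ (φ m) = c := hbp₁ _ _ hpm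
      rw [hba₁ m, ha₁m] at this
      simp at this

end Aux

section Construction

/-- generic pin constraint -/
def pinC {V : Type} (c : Bool) (v : V) : Constraint V :=
  ⟨1, if c then Rone else Rzero, fun _ => v⟩

lemma pinC_sat {V : Type} (c : Bool) (v : V) (σ : V → Bool) :
    (pinC c v).sat σ ↔ σ v = c := by
  cases c <;> simp [pinC, Constraint.sat, Rone, Rzero, Set.mem_setOf_eq] <;> exact Iff.rfl

/-- generic gadget scope -/
def gsc {n : ℕ} {V : Type} (a b : Fin n) (u v : V) (w : Fin n → V) : Fin n → V :=
  fun j => if j = a then u else if j = b then v else w j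

lemma gsc_ne {n : ℕ} {V : Type} {a b : Fin n} {u v : V} {w : Fin n → V} {t : V}
    (hu : u ≠ t) (hv : v ≠ t) (hw : ∀ j, w j ≠ t) : ∀ j, gsc a b u v w j ≠ t := by
  intro j; unfold gsc; split_ifs
  · exact hu
  · exact hv
  · exact hw j

lemma gsc_inj {n : ℕ} {V : Type} {a b : Fin n} (hab : a ≠ b) {u v : V} {w : Fin n → V}
    (hw : Function.Injective w) (huv : u ≠ v) (hu : ∀ j, u ≠ w j) (hv : ∀ j, v ≠ w j) :
    Function.Injective (gsc a b u v w) := by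
  intro x y h
  unfold gsc at h
  by_cases hx1 : x = a <;> by_cases hy1 : y = a
  · rw [hx1, hy1]
  · by_cases hy2 : y = b
    · rw [if_pos hx1, if_neg hy1, if_pos hy2] at h; exact absurd h huv
    · rw [if_pos hx1, if_neg hy1, if_neg hy2] at h; exact absurd h (hu y)
  · by_cases hx2 : x = b
    · rw [if_neg hx1, if_pos hx2, if_pos hy1] at h; exact absurd h.symm huv
    · rw [if_neg hx1, if_neg hx2, if_pos hy1] at h; exact absurd h.symm (hu x)
  · by_cases hx2 : x = b <;> by_cases hy2 : y = b
    · rw [hx2, hy2]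
    · rw [if_neg hx1, if_pos hx2, if_neg hy1, if_neg hy2] at h; exact absurd h (hv y)
    · rw [if_neg hx1, if_neg hx2, if_neg hy1, if_pos hy2] at h; exact absurd h.symm (hv x)
    · rw [if_neg hx1, if_neg hx2, if_neg hy1, if_neg hy2] at h; exact hw h

lemma gsc_apply_a {n : ℕ} {V : Type} (a b : Fin n) (u v : V) (w : Fin n → V) :
    gsc a b u v w a = u := by simp [gsc]

lemma gsc_apply_b {n : ℕ} {V : Type} {a b : Fin n} (hab : b ≠ a) (u v : V) (w : Fin n → V) :
    gsc a b u v w b = v := by simp [gsc, hab]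

lemma gsc_apply_w {n : ℕ} {V : Type} {a b j : Fin n} (h1 : j ≠ a) (h2 : j ≠ b)
    (u v : V) (w : Fin n → V) : gsc a b u v w j = w j := by simp [gsc, h1, h2]

/-- satisfaction of a gadget constraint from an explicit witness -/
lemma sat_gsc {n : ℕ} {Rel : BoolRel n} {S : BoolRel 2} (Gd : PGadget n Rel S)
    {V : Type} (u v : V) (w : Fin n → V) (σ : V → Bool) (b : Fin n → Bool) (hb : b ∈ Rel)
    (hu : σ u = b (Gd.φ 0)) (hv : σ v = b (Gd.φ 1))
    (hw : ∀ j, j ≠ Gd.φ 0 → j ≠ Gd.φ 1 → σ (w j) = b j) :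
    Constraint.sat ⟨n, Rel, gsc (Gd.φ 0) (Gd.φ 1) u v w⟩ σ := by
  show (fun j => σ (gsc (Gd.φ 0) (Gd.φ 1) u v w j)) ∈ Rel
  have he : (fun j => σ (gsc (Gd.φ 0) (Gd.φ 1) u v w j)) = b := by
    funext j
    by_cases h1 : j = Gd.φ 0
    · subst h1; rw [gsc_apply_a]; exact hu
    · by_cases h2 : j = Gd.φ 1
      · subst h2; rw [gsc_apply_b h1]; exact hv
      · rw [gsc_apply_w h1 h2]; exact hw j h1 h2
  rw [he]; exact hb

lemma phi_ne {n : ℕ} {Rel : BoolRel n} {S : BoolRel 2} (Gd : PGadget n Rel S) :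
    Gd.φ 0 ≠ Gd.φ 1 := fun h => absurd (Gd.inj h) (by decide)

/-- boundary extraction from a satisfied gadget constraint -/
lemma boundary_of_sat {n : ℕ} {Rel : BoolRel n} {S : BoolRel 2} (Gd : PGadget n Rel S)
    {V : Type} {u v : V} {w : Fin n → V} {σ : V → Bool}
    (hsat : Constraint.sat ⟨n, Rel, gsc (Gd.φ 0) (Gd.φ 1) u v w⟩ σ)
    (hpins : ∀ j c, Gd.pin j = some c → σ (w j) = c) :
    (fun m : Fin 2 => if m = 0 then σ u else σ v) ∈ S := by
  apply (Gd.spec _).2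
  refine ⟨fun j => σ (gsc (Gd.φ 0) (Gd.φ 1) u v w j), hsat, ?_, ?_⟩
  · intro j c hjc
    have h0 : j ≠ Gd.φ 0 := by rintro rfl; rw [Gd.pfree 0] at hjc; cases hjc
    have h1 : j ≠ Gd.φ 1 := by rintro rfl; rw [Gd.pfree 1] at hjc; cases hjc
    show σ (gsc (Gd.φ 0) (Gd.φ 1) u v w j) = c
    rw [gsc_apply_w h0 h1]; exact hpins j c hjc
  · intro m
    match m with
    | 0 =>
        show σ (gsc (Gd.φ 0) (Gd.φ 1) u v w (Gd.φ 0)) = _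
        rw [gsc_apply_a]; simp
    | 1 =>
        show σ (gsc (Gd.φ 0) (Gd.φ 1) u v w (Gd.φ 1)) = _
        rw [gsc_apply_b (phi_ne Gd).symm]; simp

lemma mem_ROR_pair {x y : Bool} :
    (fun m : Fin 2 => if m = 0 then x else y) ∈ ROR ↔ (x = true ∨ y = true) := by
  simp [ROR, Set.mem_setOf_eq]

lemma mem_RNAND_pair {x y : Bool} :
    (fun m : Fin 2 => if m = 0 then x else y) ∈ RNAND ↔ (x = false ∨ y = false) := by
  simp [RNAND, Set.mem_setOf_eq]

variable (r r' k : ℕ)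

abbrev UTy : Type :=
  Fin k ⊕ ((Fin k × Fin 2) ⊕ ((Fin k × Fin 2) × (Fin r ⊕ Fin r')))

def lenV : ℕ := k + Fintype.card (UTy r r' k)

noncomputable def eqvV : (Fin k ⊕ UTy r r' k) ≃ Fin (lenV r r' k) :=
  (Equiv.sumCongr (Equiv.refl _) (Fintype.equivFin _)).trans finSumFinEquiv

noncomputable def vX (i : Fin k) : Fin (lenV r r' k) := eqvV r r' k (Sum.inl i)
noncomputable def vY (i : Fin k) : Fin (lenV r r' k) := eqvV r r' k (Sum.inr (Sum.inl i))
noncomputable def vZ (i : Fin k) (g : Fin 2) : Fin (lenV r r' k) :=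
  eqvV r r' k (Sum.inr (Sum.inr (Sum.inl (i, g))))
noncomputable def vW (i : Fin k) (g : Fin 2) (j : Fin r ⊕ Fin r') : Fin (lenV r r' k) :=
  eqvV r r' k (Sum.inr (Sum.inr (Sum.inr ((i, g), j))))

@[simp] lemma vX_eq_vX {i i'} : vX r r' k i = vX r r' k i' ↔ i = i' := by
  simp [vX, Equiv.apply_eq_iff_eq]
@[simp] lemma vY_eq_vY {i i'} : vY r r' k i = vY r r' k i' ↔ i = i' := by
  simp [vY, Equiv.apply_eq_iff_eq]
@[simp] lemma vZ_eq_vZ {i i' g g'} : vZ r r' k i g = vZ r r' k i' g' ↔ i = i' ∧ g = g' := by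
  simp [vZ, Equiv.apply_eq_iff_eq, Prod.ext_iff]
@[simp] lemma vW_eq_vW {i i' g g' j j'} :
    vW r r' k i g j = vW r r' k i' g' j' ↔ i = i' ∧ g = g' ∧ j = j' := by
  simp [vW, Equiv.apply_eq_iff_eq, Prod.ext_iff, and_assoc]
@[simp] lemma vX_ne_vY {i i'} : vX r r' k i ≠ vY r r' k i' := by
  simp [vX, vY, Equiv.apply_eq_iff_eq]
@[simp] lemma vX_ne_vZ {i i' g} : vX r r' k i ≠ vZ r r' k i' g := by
  simp [vX, vZ, Equiv.apply_eq_iff_eq]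
@[simp] lemma vX_ne_vW {i i' g j} : vX r r' k i ≠ vW r r' k i' g j := by
  simp [vX, vW, Equiv.apply_eq_iff_eq]
@[simp] lemma vY_ne_vX {i i'} : vY r r' k i ≠ vX r r' k i' := by
  simp [vX, vY, Equiv.apply_eq_iff_eq]
@[simp] lemma vY_ne_vZ {i i' g} : vY r r' k i ≠ vZ r r' k i' g := by
  simp [vY, vZ, Equiv.apply_eq_iff_eq]
@[simp] lemma vY_ne_vW {i i' g j} : vY r r' k i ≠ vW r r' k i' g j := by
  simp [vY, vW, Equiv.apply_eq_iff_eq]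
@[simp] lemma vZ_ne_vX {i i' g} : vZ r r' k i g ≠ vX r r' k i' := by
  simp [vX, vZ, Equiv.apply_eq_iff_eq]
@[simp] lemma vZ_ne_vY {i i' g} : vZ r r' k i g ≠ vY r r' k i' := by
  simp [vY, vZ, Equiv.apply_eq_iff_eq]
@[simp] lemma vZ_ne_vW {i i' g g' j} : vZ r r' k i g ≠ vW r r' k i' g' j := by
  simp [vZ, vW, Equiv.apply_eq_iff_eq]
@[simp] lemma vW_ne_vX {i i' g j} : vW r r' k i g j ≠ vX r r' k i' := by
  simp [vX, vW, Equiv.apply_eq_iff_eq]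
@[simp] lemma vW_ne_vY {i i' g j} : vW r r' k i g j ≠ vY r r' k i' := by
  simp [vY, vW, Equiv.apply_eq_iff_eq]
@[simp] lemma vW_ne_vZ {i i' g g' j} : vW r r' k i g j ≠ vZ r r' k i' g' := by
  simp [vZ, vW, Equiv.apply_eq_iff_eq]

lemma vW_inl_inj {i g} : Function.Injective (fun j : Fin r => vW r r' k i g (Sum.inl j)) := by
  intro x y h; simpa using h
lemma vW_inr_inj {i g} : Function.Injective (fun j : Fin r' => vW r r' k i g (Sum.inr j)) := by
  intro x y h; simpa using h

variable {R : BoolRel r} {R' : BoolRel r'}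
variable (G : PGadget r R ROR) (G' : PGadget r' R' RNAND)

variable [NeZero k]

/-- NAND(X i, Z i 0) -/
noncomputable def CN1 (i : Fin k) : Constraint (Fin (lenV r r' k)) :=
  ⟨r', R', gsc (G'.φ 0) (G'.φ 1) (vX r r' k i) (vZ r r' k i 0)
    (fun j => vW r r' k i 0 (Sum.inr j))⟩
/-- OR(Z i 0, Y i) -/
noncomputable def CO2 (i : Fin k) : Constraint (Fin (lenV r r' k)) :=
  ⟨r, R, gsc (G.φ 0) (G.φ 1) (vZ r r' k i 0) (vY r r' k i)
    (fun j => vW r r' k i 0 (Sum.inl j))⟩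
/-- OR(X (i+1), Z i 1) -/
noncomputable def CO3 (i : Fin k) : Constraint (Fin (lenV r r' k)) :=
  ⟨r, R, gsc (G.φ 0) (G.φ 1) (vX r r' k (i + 1)) (vZ r r' k i 1)
    (fun j => vW r r' k i 1 (Sum.inl j))⟩
/-- NAND(Z i 1, Y i) -/
noncomputable def CN4 (i : Fin k) : Constraint (Fin (lenV r r' k)) :=
  ⟨r', R', gsc (G'.φ 0) (G'.φ 1) (vZ r r' k i 1) (vY r r' k i)
    (fun j => vW r r' k i 1 (Sum.inr j))⟩

noncomputable def pinsR (i : Fin k) (g : Fin 2) : List (Constraint (Fin (lenV r r' k))) :=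
  (List.finRange r).filterMap fun j => (G.pin j).map fun c => pinC c (vW r r' k i g (Sum.inl j))
noncomputable def pinsR' (i : Fin k) (g : Fin 2) : List (Constraint (Fin (lenV r r' k))) :=
  (List.finRange r').filterMap fun j => (G'.pin j).map fun c => pinC c (vW r r' k i g (Sum.inr j))

noncomputable def gadgetL (i : Fin k) : List (Constraint (Fin (lenV r r' k))) :=
  [CN1 r r' k G' i, CO2 r r' k G i, CO3 r r' k G i, CN4 r r' k G' i]
    ++ pinsR r r' k G i 0 ++ pinsR' r r' k G' i 0 ++ pinsR r r' k G i 1 ++ pinsR' r r' k G' i 1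

noncomputable def Inst : CSPInstance (Fin (lenV r r' k)) :=
  ⟨(List.finRange k).flatMap (gadgetL r r' k G G')⟩

/-- convenient characterization of satisfaction -/
def SatAll (σ : Fin (lenV r r' k) → Bool) : Prop :=
  ∀ i : Fin k,
    (CN1 r r' k G' i).sat σ ∧ (CO2 r r' k G i).sat σ ∧ (CO3 r r' k G i).sat σ ∧
    (CN4 r r' k G' i).sat σ ∧
    (∀ (g : Fin 2) (j : Fin r) (c : Bool), G.pin j = some c → σ (vW r r' k i g (Sum.inl j)) = c) ∧
    (∀ (g : Fin 2) (j : Fin r') (c : Bool), G'.pin j = some c → σ (vW r r' k i g (Sum.inr j)) = c)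

lemma fin2_cases : ∀ g : Fin 2, g = 0 ∨ g = 1 := by decide

lemma fin2_add_one_add_one : ∀ g : Fin 2, g + 1 + 1 = g := by decide

lemma mem_gadgetL_pinsR (i : Fin k) (g : Fin 2) {c : Constraint (Fin (lenV r r' k))}
    (hc : c ∈ pinsR r r' k G i g) : c ∈ gadgetL r r' k G G' i := by
  rcases fin2_cases g with rfl | rfl <;> simp only [gadgetL, List.mem_append] <;> tauto

lemma mem_gadgetL_pinsR' (i : Fin k) (g : Fin 2) {c : Constraint (Fin (lenV r r' k))}
    (hc : c ∈ pinsR' r r' k G' i g) : c ∈ gadgetL r r' k G G' i := by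
  rcases fin2_cases g with rfl | rfl <;> simp only [gadgetL, List.mem_append] <;> tauto

lemma sat_iff (σ : Fin (lenV r r' k) → Bool) :
    (Inst r r' k G G').sat σ ↔ SatAll r r' k G G' σ := by
  constructor
  · intro hs i
    have hmem : ∀ c ∈ gadgetL r r' k G G' i, c.sat σ := by
      intro c hc
      exact hs c (List.mem_flatMap.2 ⟨i, List.mem_finRange i, hc⟩)
    refine ⟨hmem _ (by simp [gadgetL]), hmem _ (by simp [gadgetL]), hmem _ (by simp [gadgetL]),
      hmem _ (by simp [gadgetL]), ?_, ?_⟩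
    · intro g j c hjc
      have hpc : pinC c (vW r r' k i g (Sum.inl j)) ∈ pinsR r r' k G i g := by
        refine List.mem_filterMap.2 ⟨j, List.mem_finRange j, ?_⟩
        rw [hjc]; rfl
      exact (pinC_sat _ _ _).1 (hmem _ (mem_gadgetL_pinsR r r' k G G' i g hpc))
    · intro g j c hjc
      have hpc : pinC c (vW r r' k i g (Sum.inr j)) ∈ pinsR' r r' k G' i g := by
        refine List.mem_filterMap.2 ⟨j, List.mem_finRange j, ?_⟩
        rw [hjc]; rfl
      exact (pinC_sat _ _ _).1 (hmem _ (mem_gadgetL_pinsR' r r' k G G' i g hpc))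
  · intro hs c hc
    obtain ⟨i, -, hci⟩ := List.mem_flatMap.1 hc
    obtain ⟨h1, h2, h3, h4, h5, h6⟩ := hs i
    simp only [gadgetL, List.mem_append, List.mem_cons, List.not_mem_nil, or_false] at hci
    rcases hci with ((((rfl | rfl | rfl | rfl) | hp) | hp) | hp) | hp
    · exact h1
    · exact h2
    · exact h3
    · exact h4
    · obtain ⟨j, -, hj⟩ := List.mem_filterMap.1 hp
      obtain ⟨cc, hcc, rfl⟩ := Option.map_eq_some_iff.1 hj
      exact (pinC_sat _ _ _).2 (h5 0 j cc hcc)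
    · obtain ⟨j, -, hj⟩ := List.mem_filterMap.1 hp
      obtain ⟨cc, hcc, rfl⟩ := Option.map_eq_some_iff.1 hj
      exact (pinC_sat _ _ _).2 (h6 0 j cc hcc)
    · obtain ⟨j, -, hj⟩ := List.mem_filterMap.1 hp
      obtain ⟨cc, hcc, rfl⟩ := Option.map_eq_some_iff.1 hj
      exact (pinC_sat _ _ _).2 (h5 1 j cc hcc)
    · obtain ⟨j, -, hj⟩ := List.mem_filterMap.1 hp
      obtain ⟨cc, hcc, rfl⟩ := Option.map_eq_some_iff.1 hj
      exact (pinC_sat _ _ _).2 (h6 1 j cc hcc)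

def occ {V : Type} [DecidableEq V] (c : Constraint V) (v : V) : ℕ :=
  (Finset.univ.filter fun i => c.scope i = v).card

lemma varDegree_eq {V : Type} [DecidableEq V] (I : CSPInstance V) (v : V) :
    varDegree I v = (I.constraints.map fun c => occ c v).sum := rfl

lemma occ_le_one {V : Type} [DecidableEq V] {c : Constraint V}
    (h : Function.Injective c.scope) (v : V) : occ c v ≤ 1 := by
  apply Finset.card_le_one.2
  intro a ha b hb
  exact h ((Finset.mem_filter.1 ha).2.trans ((Finset.mem_filter.1 hb).2).symm)

lemma occ_eq_zero {V : Type} [DecidableEq V] {c : Constraint V} {v : V}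
    (h : ∀ i, c.scope i ≠ v) : occ c v = 0 := by
  rw [occ, Finset.card_eq_zero, Finset.filter_eq_empty_iff]
  exact fun i _ => h i

lemma occ_le_zero {V : Type} [DecidableEq V] {c : Constraint V} {v : V}
    (h : ∀ i, c.scope i ≠ v) : occ c v ≤ 0 := le_of_eq (occ_eq_zero h)

lemma occ_pinC {V : Type} [DecidableEq V] (c : Bool) (u v : V) :
    occ (pinC c u) v = if u = v then 1 else 0 := by
  by_cases h : u = v <;> simp [occ, pinC, h] <;> exact Finset.card_univ.trans (Fintype.card_fin 1)

lemma sum_map_bind {α β : Type*} (l : List α) (g : α → List β) (f : β → ℕ) :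
    ((l.flatMap g).map f).sum = (l.map fun a => ((g a).map f).sum).sum := by
  induction l with
  | nil => rfl
  | cons a l ih => simp [List.flatMap_cons, ih]

lemma sum_map_filterMap {α β : Type*} (l : List α) (h : α → Option β) (f : β → ℕ) :
    ((l.filterMap h).map f).sum = (l.map fun a => ((h a).map f).getD 0).sum := by
  induction l with
  | nil => rfl
  | cons a l ih => cases ha : h a <;> simp [List.filterMap_cons, ha, ih]

lemma bN1 {σ : Fin (lenV r r' k) → Bool} (hs : SatAll r r' k G G' σ) (i : Fin k) :
    σ (vX r r' k i) = false ∨ σ (vZ r r' k i 0) = false :=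
  mem_RNAND_pair.1 (boundary_of_sat G' (hs i).1 (fun j c hc => (hs i).2.2.2.2.2 0 j c hc))

lemma bOR2 {σ : Fin (lenV r r' k) → Bool} (hs : SatAll r r' k G G' σ) (i : Fin k) :
    σ (vZ r r' k i 0) = true ∨ σ (vY r r' k i) = true :=
  mem_ROR_pair.1 (boundary_of_sat G (hs i).2.1 (fun j c hc => (hs i).2.2.2.2.1 0 j c hc))

lemma bOR3 {σ : Fin (lenV r r' k) → Bool} (hs : SatAll r r' k G G' σ) (i : Fin k) :
    σ (vX r r' k (i + 1)) = true ∨ σ (vZ r r' k i 1) = true :=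
  mem_ROR_pair.1 (boundary_of_sat G (hs i).2.2.1 (fun j c hc => (hs i).2.2.2.2.1 1 j c hc))

lemma bN4 {σ : Fin (lenV r r' k) → Bool} (hs : SatAll r r' k G G' σ) (i : Fin k) :
    σ (vZ r r' k i 1) = false ∨ σ (vY r r' k i) = false :=
  mem_RNAND_pair.1 (boundary_of_sat G' (hs i).2.2.2.1 (fun j c hc => (hs i).2.2.2.2.2 1 j c hc))

lemma step_true {σ : Fin (lenV r r' k) → Bool} (hs : SatAll r r' k G G' σ) (i : Fin k)
    (h : σ (vX r r' k i) = true) : σ (vX r r' k (i + 1)) = true := by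
  have hz0 : σ (vZ r r' k i 0) = false := by
    rcases bN1 r r' k G G' hs i with h' | h'
    · rw [h] at h'; cases h'
    · exact h'
  have hy : σ (vY r r' k i) = true := by
    rcases bOR2 r r' k G G' hs i with h' | h'
    · rw [hz0] at h'; cases h'
    · exact h'
  have hz1 : σ (vZ r r' k i 1) = false := by
    rcases bN4 r r' k G G' hs i with h' | h'
    · exact h'
    · rw [hy] at h'; cases h'
  rcases bOR3 r r' k G G' hs i with h' | h'
  · exact h'
  · rw [hz1] at h'; cases h'

lemma forced0 {σ : Fin (lenV r r' k) → Bool} (hs : SatAll r r' k G G' σ)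
    (hX : ∀ i, σ (vX r r' k i) = false) (i : Fin k) :
    σ (vY r r' k i) = false ∧ σ (vZ r r' k i 0) = true ∧ σ (vZ r r' k i 1) = true := by
  have hz1 : σ (vZ r r' k i 1) = true := by
    rcases bOR3 r r' k G G' hs i with h' | h'
    · rw [hX (i+1)] at h'; cases h'
    · exact h'
  have hy : σ (vY r r' k i) = false := by
    rcases bN4 r r' k G G' hs i with h' | h'
    · rw [hz1] at h'; cases h'
    · exact h'
  have hz0 : σ (vZ r r' k i 0) = true := by
    rcases bOR2 r r' k G G' hs i with h' | h'
    · exact h'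
    · rw [hy] at h'; cases h'
  exact ⟨hy, hz0, hz1⟩

lemma forced1 {σ : Fin (lenV r r' k) → Bool} (hs : SatAll r r' k G G' σ)
    (hX : ∀ i, σ (vX r r' k i) = true) (i : Fin k) :
    σ (vY r r' k i) = true ∧ σ (vZ r r' k i 0) = false ∧ σ (vZ r r' k i 1) = false := by
  have hz0 : σ (vZ r r' k i 0) = false := by
    rcases bN1 r r' k G G' hs i with h' | h'
    · rw [hX i] at h'; cases h'
    · exact h'
  have hy : σ (vY r r' k i) = true := by
    rcases bOR2 r r' k G G' hs i with h' | h'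
    · rw [hz0] at h'; cases h'
    · exact h'
  have hz1 : σ (vZ r r' k i 1) = false := by
    rcases bN4 r r' k G G' hs i with h' | h'
    · exact h'
    · rw [hy] at h'; cases h'
  exact ⟨hy, hz0, hz1⟩

open Fin.NatCast in
lemma dichotomy {σ : Fin (lenV r r' k) → Bool} (hs : SatAll r r' k G G' σ) :
    (∀ i, σ (vX r r' k i) = false) ∨ (∀ i, σ (vX r r' k i) = true) := by
  by_cases hex : ∃ i, σ (vX r r' k i) = true
  · right
    obtain ⟨i, hi⟩ := hex
    have hall : ∀ t : ℕ, σ (vX r r' k (i + (t : Fin k))) = true := by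
      intro t
      induction t with
      | zero => simpa using hi
      | succ t ih =>
          have hc : ((t + 1 : ℕ) : Fin k) = (t : Fin k) + 1 := by push_cast; ring
          rw [hc, ← add_assoc]
          exact step_true r r' k G G' hs _ ih
    intro j
    have h := hall ((j - i : Fin k) : ℕ)
    have he : i + ((((j - i : Fin k) : ℕ)) : Fin k) = j := by
      rw [Fin.cast_val_eq_self]
      abel
    rwa [he] at h
  · left
    intro i
    have := not_exists.1 hex i
    simpa using this

noncomputable def Fmap (σ : Fin (lenV r r' k) → Bool) : Fin (lenV r r' k) → Bool := fun v =>
  match (eqvV r r' k).symm v with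
  | Sum.inl _ => true
  | Sum.inr (Sum.inl _) => true
  | Sum.inr (Sum.inr (Sum.inl _)) => false
  | Sum.inr (Sum.inr (Sum.inr ((i, g), j))) => σ (vW r r' k i (g + 1) j)

noncomputable def Gmap (σ : Fin (lenV r r' k) → Bool) : Fin (lenV r r' k) → Bool := fun v =>
  match (eqvV r r' k).symm v with
  | Sum.inl _ => false
  | Sum.inr (Sum.inl _) => false
  | Sum.inr (Sum.inr (Sum.inl _)) => true
  | Sum.inr (Sum.inr (Sum.inr ((i, g), j))) => σ (vW r r' k i (g + 1) j)

@[simp] lemma Fmap_vX {σ} (i : Fin k) : Fmap r r' k σ (vX r r' k i) = true := by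
  simp [Fmap, vX, Equiv.symm_apply_apply]
@[simp] lemma Fmap_vY {σ} (i : Fin k) : Fmap r r' k σ (vY r r' k i) = true := by
  simp [Fmap, vY, Equiv.symm_apply_apply]
@[simp] lemma Fmap_vZ {σ} (i : Fin k) (g : Fin 2) : Fmap r r' k σ (vZ r r' k i g) = false := by
  simp [Fmap, vZ, Equiv.symm_apply_apply]
@[simp] lemma Fmap_vW {σ} (i : Fin k) (g : Fin 2) (j : Fin r ⊕ Fin r') :
    Fmap r r' k σ (vW r r' k i g j) = σ (vW r r' k i (g + 1) j) := by
  simp [Fmap, vW, Equiv.symm_apply_apply]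
@[simp] lemma Gmap_vX {σ} (i : Fin k) : Gmap r r' k σ (vX r r' k i) = false := by
  simp [Gmap, vX, Equiv.symm_apply_apply]
@[simp] lemma Gmap_vY {σ} (i : Fin k) : Gmap r r' k σ (vY r r' k i) = false := by
  simp [Gmap, vY, Equiv.symm_apply_apply]
@[simp] lemma Gmap_vZ {σ} (i : Fin k) (g : Fin 2) : Gmap r r' k σ (vZ r r' k i g) = true := by
  simp [Gmap, vZ, Equiv.symm_apply_apply]
@[simp] lemma Gmap_vW {σ} (i : Fin k) (g : Fin 2) (j : Fin r ⊕ Fin r') :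
    Gmap r r' k σ (vW r r' k i g j) = σ (vW r r' k i (g + 1) j) := by
  simp [Gmap, vW, Equiv.symm_apply_apply]

lemma zero_add_one : (0 : Fin 2) + 1 = 1 := by decide
lemma one_add_one : (1 : Fin 2) + 1 = 0 := by decide

lemma Fmap_satAll {σ : Fin (lenV r r' k) → Bool} (hs : SatAll r r' k G G' σ)
    (hX : ∀ i, σ (vX r r' k i) = false) : SatAll r r' k G G' (Fmap r r' k σ) := by
  intro i
  obtain ⟨hy, hz0, hz1⟩ := forced0 r r' k G G' hs hX i
  refine ⟨?_, ?_, ?_, ?_, ?_, ?_⟩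
  · -- CN1 for Fmap σ, witness from CN4 of σ
    apply sat_gsc G' _ _ _ _ _ ((hs i).2.2.2.1)
    · rw [Fmap_vX]
      simp only [CN4]
      rw [gsc_apply_a, hz1]
    · rw [Fmap_vZ]
      simp only [CN4]
      rw [gsc_apply_b (phi_ne G').symm, hy]
    · intro j hj0 hj1
      rw [Fmap_vW]
      simp only [CN4]
      rw [gsc_apply_w hj0 hj1, zero_add_one]
  · -- CO2 for Fmap σ, witness from CO3 of σ
    apply sat_gsc G _ _ _ _ _ ((hs i).2.2.1)
    · rw [Fmap_vZ]
      simp only [CO3]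
      rw [gsc_apply_a, hX (i+1)]
    · rw [Fmap_vY]
      simp only [CO3]
      rw [gsc_apply_b (phi_ne G).symm, hz1]
    · intro j hj0 hj1
      rw [Fmap_vW]
      simp only [CO3]
      rw [gsc_apply_w hj0 hj1, zero_add_one]
  · -- CO3 for Fmap σ, witness from CO2 of σ
    apply sat_gsc G _ _ _ _ _ ((hs i).2.1)
    · rw [Fmap_vX]
      simp only [CO2]
      rw [gsc_apply_a, hz0]
    · rw [Fmap_vZ]
      simp only [CO2]
      rw [gsc_apply_b (phi_ne G).symm, hy]
    · intro j hj0 hj1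
      rw [Fmap_vW]
      simp only [CO2]
      rw [gsc_apply_w hj0 hj1, one_add_one]
  · -- CN4 for Fmap σ, witness from CN1 of σ
    apply sat_gsc G' _ _ _ _ _ ((hs i).1)
    · rw [Fmap_vZ]
      simp only [CN1]
      rw [gsc_apply_a, hX i]
    · rw [Fmap_vY]
      simp only [CN1]
      rw [gsc_apply_b (phi_ne G').symm, hz0]
    · intro j hj0 hj1
      rw [Fmap_vW]
      simp only [CN1]
      rw [gsc_apply_w hj0 hj1, one_add_one]
  · intro g j c hc
    rw [Fmap_vW]
    exact (hs i).2.2.2.2.1 (g + 1) j c hc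
  · intro g j c hc
    rw [Fmap_vW]
    exact (hs i).2.2.2.2.2 (g + 1) j c hc

lemma Gmap_satAll {σ : Fin (lenV r r' k) → Bool} (hs : SatAll r r' k G G' σ)
    (hX : ∀ i, σ (vX r r' k i) = true) : SatAll r r' k G G' (Gmap r r' k σ) := by
  intro i
  obtain ⟨hy, hz0, hz1⟩ := forced1 r r' k G G' hs hX i
  refine ⟨?_, ?_, ?_, ?_, ?_, ?_⟩
  · apply sat_gsc G' _ _ _ _ _ ((hs i).2.2.2.1)
    · rw [Gmap_vX]
      simp only [CN4]
      rw [gsc_apply_a, hz1]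
    · rw [Gmap_vZ]
      simp only [CN4]
      rw [gsc_apply_b (phi_ne G').symm, hy]
    · intro j hj0 hj1
      rw [Gmap_vW]
      simp only [CN4]
      rw [gsc_apply_w hj0 hj1, zero_add_one]
  · apply sat_gsc G _ _ _ _ _ ((hs i).2.2.1)
    · rw [Gmap_vZ]
      simp only [CO3]
      rw [gsc_apply_a, hX (i+1)]
    · rw [Gmap_vY]
      simp only [CO3]
      rw [gsc_apply_b (phi_ne G).symm, hz1]
    · intro j hj0 hj1
      rw [Gmap_vW]
      simp only [CO3]
      rw [gsc_apply_w hj0 hj1, zero_add_one]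
  · apply sat_gsc G _ _ _ _ _ ((hs i).2.1)
    · rw [Gmap_vX]
      simp only [CO2]
      rw [gsc_apply_a, hz0]
    · rw [Gmap_vZ]
      simp only [CO2]
      rw [gsc_apply_b (phi_ne G).symm, hy]
    · intro j hj0 hj1
      rw [Gmap_vW]
      simp only [CO2]
      rw [gsc_apply_w hj0 hj1, one_add_one]
  · apply sat_gsc G' _ _ _ _ _ ((hs i).1)
    · rw [Gmap_vZ]
      simp only [CN1]
      rw [gsc_apply_a, hX i]
    · rw [Gmap_vY]
      simp only [CN1]
      rw [gsc_apply_b (phi_ne G').symm, hz0]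
    · intro j hj0 hj1
      rw [Gmap_vW]
      simp only [CN1]
      rw [gsc_apply_w hj0 hj1, one_add_one]
  · intro g j c hc
    rw [Gmap_vW]
    exact (hs i).2.2.2.2.1 (g + 1) j c hc
  · intro g j c hc
    rw [Gmap_vW]
    exact (hs i).2.2.2.2.2 (g + 1) j c hc

lemma Gmap_Fmap {σ : Fin (lenV r r' k) → Bool} (hs : SatAll r r' k G G' σ)
    (hX : ∀ i, σ (vX r r' k i) = false) : Gmap r r' k (Fmap r r' k σ) = σ := by
  funext v
  rcases hv : (eqvV r r' k).symm v with i | u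
  · rw [(Equiv.symm_apply_eq _).1 hv]
    rw [show (eqvV r r' k) (Sum.inl i) = vX r r' k i from rfl, Gmap_vX]
    exact (hX i).symm
  · rcases u with i | zw
    · rw [(Equiv.symm_apply_eq _).1 hv]
      rw [show (eqvV r r' k) (Sum.inr (Sum.inl i)) = vY r r' k i from rfl, Gmap_vY]
      exact ((forced0 r r' k G G' hs hX i).1).symm
    · rcases zw with ⟨i, g⟩ | ⟨⟨i, g⟩, j⟩
      · rw [(Equiv.symm_apply_eq _).1 hv]
        rw [show (eqvV r r' k) (Sum.inr (Sum.inr (Sum.inl (i, g)))) = vZ r r' k i g from rfl,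
          Gmap_vZ]
        rcases fin2_cases g with rfl | rfl
        · exact ((forced0 r r' k G G' hs hX i).2.1).symm
        · exact ((forced0 r r' k G G' hs hX i).2.2).symm
      · rw [(Equiv.symm_apply_eq _).1 hv]
        rw [show (eqvV r r' k) (Sum.inr (Sum.inr (Sum.inr ((i, g), j)))) = vW r r' k i g j
          from rfl, Gmap_vW, Fmap_vW, fin2_add_one_add_one]

lemma Fmap_Gmap {σ : Fin (lenV r r' k) → Bool} (hs : SatAll r r' k G G' σ)
    (hX : ∀ i, σ (vX r r' k i) = true) : Fmap r r' k (Gmap r r' k σ) = σ := by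
  funext v
  rcases hv : (eqvV r r' k).symm v with i | u
  · rw [(Equiv.symm_apply_eq _).1 hv]
    rw [show (eqvV r r' k) (Sum.inl i) = vX r r' k i from rfl, Fmap_vX]
    exact (hX i).symm
  · rcases u with i | zw
    · rw [(Equiv.symm_apply_eq _).1 hv]
      rw [show (eqvV r r' k) (Sum.inr (Sum.inl i)) = vY r r' k i from rfl, Fmap_vY]
      exact ((forced1 r r' k G G' hs hX i).1).symm
    · rcases zw with ⟨i, g⟩ | ⟨⟨i, g⟩, j⟩
      · rw [(Equiv.symm_apply_eq _).1 hv]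
        rw [show (eqvV r r' k) (Sum.inr (Sum.inr (Sum.inl (i, g)))) = vZ r r' k i g from rfl,
          Fmap_vZ]
        rcases fin2_cases g with rfl | rfl
        · exact ((forced1 r r' k G G' hs hX i).2.1).symm
        · exact ((forced1 r r' k G G' hs hX i).2.2).symm
      · rw [(Equiv.symm_apply_eq _).1 hv]
        rw [show (eqvV r r' k) (Sum.inr (Sum.inr (Sum.inr ((i, g), j)))) = vW r r' k i g j
          from rfl, Fmap_vW, Gmap_vW, fin2_add_one_add_one]

lemma vX_val (i : Fin k) : (vX r r' k i : ℕ) = (i : ℕ) := rfl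

lemma cond_iff_false (σ : Fin (lenV r r' k) → Bool) :
    (∀ v : Fin (lenV r r' k), (v : ℕ) < k → σ v = false) ↔
      (∀ i, σ (vX r r' k i) = false) := by
  constructor
  · intro h i
    exact h _ (by rw [vX_val]; exact i.isLt)
  · intro h v hv
    have he : vX r r' k ⟨(v : ℕ), hv⟩ = v := Fin.ext (vX_val r r' k _)
    rw [← he]
    exact h _

lemma cond_iff_true (σ : Fin (lenV r r' k) → Bool) :
    (∀ v : Fin (lenV r r' k), (v : ℕ) < k → σ v = true) ↔
      (∀ i, σ (vX r r' k i) = true) := by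
  constructor
  · intro h i
    exact h _ (by rw [vX_val]; exact i.isLt)
  · intro h v hv
    have he : vX r r' k ⟨(v : ℕ), hv⟩ = v := Fin.ext (vX_val r r' k _)
    rw [← he]
    exact h _

noncomputable def sigma0 (b1 b2 : Fin r → Bool) (b3 b4 : Fin r' → Bool) :
    Fin (lenV r r' k) → Bool := fun v =>
  match (eqvV r r' k).symm v with
  | Sum.inl _ => false
  | Sum.inr (Sum.inl _) => false
  | Sum.inr (Sum.inr (Sum.inl _)) => true
  | Sum.inr (Sum.inr (Sum.inr ((_, g), Sum.inl j))) => if g = 0 then b1 j else b2 j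
  | Sum.inr (Sum.inr (Sum.inr ((_, g), Sum.inr j))) => if g = 0 then b3 j else b4 j

@[simp] lemma sigma0_vX {b1 b2 b3 b4} (i : Fin k) :
    sigma0 r r' k b1 b2 b3 b4 (vX r r' k i) = false := by
  simp [sigma0, vX, Equiv.symm_apply_apply]
@[simp] lemma sigma0_vY {b1 b2 b3 b4} (i : Fin k) :
    sigma0 r r' k b1 b2 b3 b4 (vY r r' k i) = false := by
  simp [sigma0, vY, Equiv.symm_apply_apply]
@[simp] lemma sigma0_vZ {b1 b2 b3 b4} (i : Fin k) (g : Fin 2) :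
    sigma0 r r' k b1 b2 b3 b4 (vZ r r' k i g) = true := by
  simp [sigma0, vZ, Equiv.symm_apply_apply]
@[simp] lemma sigma0_vW_inl {b1 b2 b3 b4} (i : Fin k) (g : Fin 2) (j : Fin r) :
    sigma0 r r' k b1 b2 b3 b4 (vW r r' k i g (Sum.inl j)) = if g = 0 then b1 j else b2 j := by
  simp only [sigma0, vW, Equiv.symm_apply_apply]
@[simp] lemma sigma0_vW_inr {b1 b2 b3 b4} (i : Fin k) (g : Fin 2) (j : Fin r') :
    sigma0 r r' k b1 b2 b3 b4 (vW r r' k i g (Sum.inr j)) = if g = 0 then b3 j else b4 j := by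
  simp only [sigma0, vW, Equiv.symm_apply_apply]

lemma fin2_one_ne_zero : (1 : Fin 2) ≠ 0 := by decide

lemma fin2_zero_ne_one : (0 : Fin 2) ≠ 1 := by decide

lemma sigma0_satAll (b1 b2 : Fin r → Bool) (b3 b4 : Fin r' → Bool)
    (h1 : b1 ∈ R) (h1p : ∀ j c, G.pin j = some c → b1 j = c)
    (h1a : b1 (G.φ 0) = true) (h1b : b1 (G.φ 1) = false)
    (h2 : b2 ∈ R) (h2p : ∀ j c, G.pin j = some c → b2 j = c)
    (h2a : b2 (G.φ 0) = false) (h2b : b2 (G.φ 1) = true)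
    (h3 : b3 ∈ R') (h3p : ∀ j c, G'.pin j = some c → b3 j = c)
    (h3a : b3 (G'.φ 0) = false) (h3b : b3 (G'.φ 1) = true)
    (h4 : b4 ∈ R') (h4p : ∀ j c, G'.pin j = some c → b4 j = c)
    (h4a : b4 (G'.φ 0) = true) (h4b : b4 (G'.φ 1) = false) :
    SatAll r r' k G G' (sigma0 r r' k b1 b2 b3 b4) := by
  intro i
  refine ⟨?_, ?_, ?_, ?_, ?_, ?_⟩
  · -- CN1 : boundary (X i, Z i 0) = (false, true), witness b3, internals W i 0 inr
    apply sat_gsc G' _ _ _ _ b3 h3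
    · rw [sigma0_vX, h3a]
    · rw [sigma0_vZ, h3b]
    · intro j _ _
      rw [sigma0_vW_inr, if_pos rfl]
  · -- CO2 : boundary (Z i 0, Y i) = (true, false), witness b1
    apply sat_gsc G _ _ _ _ b1 h1
    · rw [sigma0_vZ, h1a]
    · rw [sigma0_vY, h1b]
    · intro j _ _
      rw [sigma0_vW_inl, if_pos rfl]
  · -- CO3 : boundary (X (i+1), Z i 1) = (false, true), witness b2
    apply sat_gsc G _ _ _ _ b2 h2
    · rw [sigma0_vX, h2a]
    · rw [sigma0_vZ, h2b]
    · intro j _ _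
      rw [sigma0_vW_inl, if_neg fin2_one_ne_zero]
  · -- CN4 : boundary (Z i 1, Y i) = (true, false), witness b4
    apply sat_gsc G' _ _ _ _ b4 h4
    · rw [sigma0_vZ, h4a]
    · rw [sigma0_vY, h4b]
    · intro j _ _
      rw [sigma0_vW_inr, if_neg fin2_one_ne_zero]
  · intro g j c hc
    rw [sigma0_vW_inl]
    rcases fin2_cases g with rfl | rfl
    · rw [if_pos rfl]; exact h1p j c hc
    · rw [if_neg fin2_one_ne_zero]; exact h2p j c hc
  · intro g j c hc
    rw [sigma0_vW_inr]
    rcases fin2_cases g with rfl | rfl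
    · rw [if_pos rfl]; exact h3p j c hc
    · rw [if_neg fin2_one_ne_zero]; exact h4p j c hc

lemma CN1_scope_inj (i : Fin k) : Function.Injective (CN1 r r' k G' i).scope := by
  simp only [CN1]
  exact gsc_inj (phi_ne G') (vW_inr_inj r r' k) (by simp) (fun j => by simp) (fun j => by simp)

lemma CO2_scope_inj (i : Fin k) : Function.Injective (CO2 r r' k G i).scope := by
  simp only [CO2]
  exact gsc_inj (phi_ne G) (vW_inl_inj r r' k) (by simp) (fun j => by simp) (fun j => by simp)

lemma CO3_scope_inj (i : Fin k) : Function.Injective (CO3 r r' k G i).scope := by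
  simp only [CO3]
  exact gsc_inj (phi_ne G) (vW_inl_inj r r' k) (by simp) (fun j => by simp) (fun j => by simp)

lemma CN4_scope_inj (i : Fin k) : Function.Injective (CN4 r r' k G' i).scope := by
  simp only [CN4]
  exact gsc_inj (phi_ne G') (vW_inr_inj r r' k) (by simp) (fun j => by simp) (fun j => by simp)

noncomputable def psumR (i : Fin k) (g : Fin 2) (v : Fin (lenV r r' k)) : ℕ :=
  ((pinsR r r' k G i g).map fun c => occ c v).sum

noncomputable def psumR' (i : Fin k) (g : Fin 2) (v : Fin (lenV r r' k)) : ℕ :=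
  ((pinsR' r r' k G' i g).map fun c => occ c v).sum

lemma psumR_le_card (i : Fin k) (g : Fin 2) (v : Fin (lenV r r' k)) :
    psumR r r' k G i g v ≤
      (Finset.univ.filter fun j : Fin r => vW r r' k i g (Sum.inl j) = v).card := by
  rw [psumR, pinsR, sum_map_filterMap, ← Fin.sum_univ_def, Finset.card_filter]
  apply Finset.sum_le_sum
  intro j _
  cases hj : G.pin j with
  | none => simp
  | some c => simp [occ_pinC]

lemma psumR'_le_card (i : Fin k) (g : Fin 2) (v : Fin (lenV r r' k)) :
    psumR' r r' k G' i g v ≤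
      (Finset.univ.filter fun j : Fin r' => vW r r' k i g (Sum.inr j) = v).card := by
  rw [psumR', pinsR', sum_map_filterMap, ← Fin.sum_univ_def, Finset.card_filter]
  apply Finset.sum_le_sum
  intro j _
  cases hj : G'.pin j with
  | none => simp
  | some c => simp [occ_pinC]

lemma psumR_le_one (i : Fin k) (g : Fin 2) (v : Fin (lenV r r' k)) :
    psumR r r' k G i g v ≤ 1 := by
  refine le_trans (psumR_le_card r r' k G i g v) (Finset.card_le_one.2 ?_)
  intro a ha b hb
  have := (Finset.mem_filter.1 ha).2.trans ((Finset.mem_filter.1 hb).2).symm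
  simpa using this

lemma psumR'_le_one (i : Fin k) (g : Fin 2) (v : Fin (lenV r r' k)) :
    psumR' r r' k G' i g v ≤ 1 := by
  refine le_trans (psumR'_le_card r r' k G' i g v) (Finset.card_le_one.2 ?_)
  intro a ha b hb
  have := (Finset.mem_filter.1 ha).2.trans ((Finset.mem_filter.1 hb).2).symm
  simpa using this

lemma psumR_eq_zero {i : Fin k} {g : Fin 2} {v : Fin (lenV r r' k)}
    (h : ∀ j : Fin r, vW r r' k i g (Sum.inl j) ≠ v) : psumR r r' k G i g v = 0 := by
  refine Nat.le_zero.1 (le_trans (psumR_le_card r r' k G i g v) (le_of_eq ?_))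
  rw [Finset.card_eq_zero, Finset.filter_eq_empty_iff]
  exact fun j _ => h j

lemma psumR'_eq_zero {i : Fin k} {g : Fin 2} {v : Fin (lenV r r' k)}
    (h : ∀ j : Fin r', vW r r' k i g (Sum.inr j) ≠ v) : psumR' r r' k G' i g v = 0 := by
  refine Nat.le_zero.1 (le_trans (psumR'_le_card r r' k G' i g v) (le_of_eq ?_))
  rw [Finset.card_eq_zero, Finset.filter_eq_empty_iff]
  exact fun j _ => h j

lemma psumR_le_zero {i : Fin k} {g : Fin 2} {v : Fin (lenV r r' k)}
    (h : ∀ j : Fin r, vW r r' k i g (Sum.inl j) ≠ v) : psumR r r' k G i g v ≤ 0 :=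
  le_of_eq (psumR_eq_zero r r' k G h)

lemma psumR'_le_zero {i : Fin k} {g : Fin 2} {v : Fin (lenV r r' k)}
    (h : ∀ j : Fin r', vW r r' k i g (Sum.inr j) ≠ v) : psumR' r r' k G' i g v ≤ 0 :=
  le_of_eq (psumR'_eq_zero r r' k G' h)

lemma dgl_eq (i : Fin k) (v : Fin (lenV r r' k)) :
    ((gadgetL r r' k G G' i).map fun c => occ c v).sum
      = occ (CN1 r r' k G' i) v + occ (CO2 r r' k G i) v + occ (CO3 r r' k G i) v
        + occ (CN4 r r' k G' i) v
        + psumR r r' k G i 0 v + psumR' r r' k G' i 0 v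
        + psumR r r' k G i 1 v + psumR' r r' k G' i 1 v := by
  simp only [gadgetL, List.map_append, List.sum_append, List.map_cons, List.sum_cons,
    List.map_nil, List.sum_nil, psumR, psumR']
  ring

lemma sum_ite_fin (i₀ : Fin k) : (∑ i : Fin k, if i = i₀ then (1 : ℕ) else 0) = 1 := by
  simp

lemma sum_ite_fin_shift (i₀ : Fin k) :
    (∑ i : Fin k, if i + 1 = i₀ then (1 : ℕ) else 0) = 1 := by
  have h : ∀ i : Fin k, (i + 1 = i₀) = (i = i₀ - 1) := by
    intro i
    rw [eq_iff_iff, ← eq_sub_iff_add_eq]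
  simp only [h]
  simp

lemma varDegree_Inst (v : Fin (lenV r r' k)) :
    varDegree (Inst r r' k G G') v
      = ∑ i : Fin k, ((gadgetL r r' k G G' i).map fun c => occ c v).sum := by
  rw [varDegree_eq]
  show ((((List.finRange k).flatMap (gadgetL r r' k G G')).map fun c => occ c v)).sum = _
  rw [sum_map_bind, ← Fin.sum_univ_def]

lemma degree_le (v : Fin (lenV r r' k)) : varDegree (Inst r r' k G G') v ≤ 2 := by
  rw [varDegree_Inst]
  rcases hv : (eqvV r r' k).symm v with i₀ | u
  all_goals have hv' := (Equiv.symm_apply_eq _).1 hv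
  -- case v = vX i₀
  · subst hv'
    have hb : ∀ i : Fin k, ((gadgetL r r' k G G' i).map
        fun c => occ c (vX r r' k i₀)).sum
        ≤ (if i = i₀ then 1 else 0) + (if i + 1 = i₀ then 1 else 0) := by
      intro i
      rw [dgl_eq]
      have h1 : occ (CN1 r r' k G' i) (vX r r' k i₀) ≤ if i = i₀ then 1 else 0 := by
        by_cases h : i = i₀
        · subst h; rw [if_pos rfl]; exact occ_le_one (CN1_scope_inj r r' k G' i) _
        · rw [if_neg h]
          exact occ_le_zero (by
            simp only [CN1]
            exact gsc_ne (by simp [h]) (by simp) (fun j => by simp))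
      have h2 : occ (CO2 r r' k G i) (vX r r' k i₀) = 0 :=
        occ_eq_zero (by
          simp only [CO2]
          exact gsc_ne (by simp) (by simp) (fun j => by simp))
      have h3 : occ (CO3 r r' k G i) (vX r r' k i₀) ≤ if i + 1 = i₀ then 1 else 0 := by
        by_cases h : i + 1 = i₀
        · rw [if_pos h]; exact occ_le_one (CO3_scope_inj r r' k G i) _
        · rw [if_neg h]
          exact occ_le_zero (by
            simp only [CO3]
            exact gsc_ne (by simp [h]) (by simp) (fun j => by simp))
      have h4 : occ (CN4 r r' k G' i) (vX r r' k i₀) = 0 :=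
        occ_eq_zero (by
          simp only [CN4]
          exact gsc_ne (by simp) (by simp) (fun j => by simp))
      have h5 : psumR r r' k G i 0 (vX r r' k i₀) = 0 :=
        psumR_eq_zero r r' k G (fun j => by simp)
      have h6 : psumR' r r' k G' i 0 (vX r r' k i₀) = 0 :=
        psumR'_eq_zero r r' k G' (fun j => by simp)
      have h7 : psumR r r' k G i 1 (vX r r' k i₀) = 0 :=
        psumR_eq_zero r r' k G (fun j => by simp)
      have h8 : psumR' r r' k G' i 1 (vX r r' k i₀) = 0 :=
        psumR'_eq_zero r r' k G' (fun j => by simp)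
      rw [h2, h4, h5, h6, h7, h8]
      simpa using add_le_add h1 h3
    refine le_trans (Finset.sum_le_sum fun i _ => hb i) ?_
    rw [Finset.sum_add_distrib, sum_ite_fin, sum_ite_fin_shift]
  · rcases u with i₀ | zw
    -- case v = vY i₀
    · subst hv'
      have hb : ∀ i : Fin k, ((gadgetL r r' k G G' i).map
          fun c => occ c (vY r r' k i₀)).sum
          ≤ (if i = i₀ then 1 else 0) + (if i = i₀ then 1 else 0) := by
        intro i
        rw [dgl_eq]
        have h1 : occ (CN1 r r' k G' i) (vY r r' k i₀) = 0 :=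
          occ_eq_zero (by
            simp only [CN1]
            exact gsc_ne (by simp) (by simp) (fun j => by simp))
        have h2 : occ (CO2 r r' k G i) (vY r r' k i₀) ≤ if i = i₀ then 1 else 0 := by
          by_cases h : i = i₀
          · subst h; rw [if_pos rfl]; exact occ_le_one (CO2_scope_inj r r' k G i) _
          · rw [if_neg h]
            exact occ_le_zero (by
              simp only [CO2]
              exact gsc_ne (by simp) (by simp [h]) (fun j => by simp))
        have h3 : occ (CO3 r r' k G i) (vY r r' k i₀) = 0 :=
          occ_eq_zero (by
            simp only [CO3]
            exact gsc_ne (by simp) (by simp) (fun j => by simp))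
        have h4 : occ (CN4 r r' k G' i) (vY r r' k i₀) ≤ if i = i₀ then 1 else 0 := by
          by_cases h : i = i₀
          · subst h; rw [if_pos rfl]; exact occ_le_one (CN4_scope_inj r r' k G' i) _
          · rw [if_neg h]
            exact occ_le_zero (by
              simp only [CN4]
              exact gsc_ne (by simp) (by simp [h]) (fun j => by simp))
        have h5 : psumR r r' k G i 0 (vY r r' k i₀) = 0 :=
          psumR_eq_zero r r' k G (fun j => by simp)
        have h6 : psumR' r r' k G' i 0 (vY r r' k i₀) = 0 :=
          psumR'_eq_zero r r' k G' (fun j => by simp)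
        have h7 : psumR r r' k G i 1 (vY r r' k i₀) = 0 :=
          psumR_eq_zero r r' k G (fun j => by simp)
        have h8 : psumR' r r' k G' i 1 (vY r r' k i₀) = 0 :=
          psumR'_eq_zero r r' k G' (fun j => by simp)
        rw [h1, h3, h5, h6, h7, h8]
        simpa using add_le_add h2 h4
      refine le_trans (Finset.sum_le_sum fun i _ => hb i) ?_
      rw [Finset.sum_add_distrib, sum_ite_fin]
    · rcases zw with ⟨i₀, g₀⟩ | ⟨⟨i₀, g₀⟩, jj⟩
      -- case v = vZ i₀ g₀
      · subst hv'
        rcases fin2_cases g₀ with rfl | rfl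
        · have hb : ∀ i : Fin k, ((gadgetL r r' k G G' i).map
              fun c => occ c (vZ r r' k i₀ 0)).sum
              ≤ (if i = i₀ then 1 else 0) + (if i = i₀ then 1 else 0) := by
            intro i
            rw [dgl_eq]
            have h1 : occ (CN1 r r' k G' i) (vZ r r' k i₀ 0) ≤ if i = i₀ then 1 else 0 := by
              by_cases h : i = i₀
              · subst h; rw [if_pos rfl]; exact occ_le_one (CN1_scope_inj r r' k G' i) _
              · rw [if_neg h]
                exact occ_le_zero (by
                  simp only [CN1]
                  exact gsc_ne (by simp) (by simp [h]) (fun j => by simp))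
            have h2 : occ (CO2 r r' k G i) (vZ r r' k i₀ 0) ≤ if i = i₀ then 1 else 0 := by
              by_cases h : i = i₀
              · subst h; rw [if_pos rfl]; exact occ_le_one (CO2_scope_inj r r' k G i) _
              · rw [if_neg h]
                exact occ_le_zero (by
                  simp only [CO2]
                  exact gsc_ne (by simp [h]) (by simp) (fun j => by simp))
            have h3 : occ (CO3 r r' k G i) (vZ r r' k i₀ 0) = 0 :=
              occ_eq_zero (by
                simp only [CO3]
                exact gsc_ne (by simp) (by simp [fin2_one_ne_zero, fin2_zero_ne_one]) (fun j => by simp))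
            have h4 : occ (CN4 r r' k G' i) (vZ r r' k i₀ 0) = 0 :=
              occ_eq_zero (by
                simp only [CN4]
                exact gsc_ne (by simp [fin2_one_ne_zero, fin2_zero_ne_one]) (by simp) (fun j => by simp))
            have h5 : psumR r r' k G i 0 (vZ r r' k i₀ 0) = 0 :=
              psumR_eq_zero r r' k G (fun j => by simp)
            have h6 : psumR' r r' k G' i 0 (vZ r r' k i₀ 0) = 0 :=
              psumR'_eq_zero r r' k G' (fun j => by simp)
            have h7 : psumR r r' k G i 1 (vZ r r' k i₀ 0) = 0 :=
              psumR_eq_zero r r' k G (fun j => by simp)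
            have h8 : psumR' r r' k G' i 1 (vZ r r' k i₀ 0) = 0 :=
              psumR'_eq_zero r r' k G' (fun j => by simp)
            rw [h3, h4, h5, h6, h7, h8]
            simpa using add_le_add h1 h2
          refine le_trans (Finset.sum_le_sum fun i _ => hb i) ?_
          rw [Finset.sum_add_distrib, sum_ite_fin]
        · have hb : ∀ i : Fin k, ((gadgetL r r' k G G' i).map
              fun c => occ c (vZ r r' k i₀ 1)).sum
              ≤ (if i = i₀ then 1 else 0) + (if i = i₀ then 1 else 0) := by
            intro i
            rw [dgl_eq]
            have h1 : occ (CN1 r r' k G' i) (vZ r r' k i₀ 1) = 0 :=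
              occ_eq_zero (by
                simp only [CN1]
                exact gsc_ne (by simp) (by simp [fin2_one_ne_zero, fin2_zero_ne_one]) (fun j => by simp))
            have h2 : occ (CO2 r r' k G i) (vZ r r' k i₀ 1) = 0 :=
              occ_eq_zero (by
                simp only [CO2]
                exact gsc_ne (by simp [fin2_one_ne_zero, fin2_zero_ne_one]) (by simp) (fun j => by simp))
            have h3 : occ (CO3 r r' k G i) (vZ r r' k i₀ 1) ≤ if i = i₀ then 1 else 0 := by
              by_cases h : i = i₀
              · subst h; rw [if_pos rfl]; exact occ_le_one (CO3_scope_inj r r' k G i) _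
              · rw [if_neg h]
                exact occ_le_zero (by
                  simp only [CO3]
                  exact gsc_ne (by simp) (by simp [h]) (fun j => by simp))
            have h4 : occ (CN4 r r' k G' i) (vZ r r' k i₀ 1) ≤ if i = i₀ then 1 else 0 := by
              by_cases h : i = i₀
              · subst h; rw [if_pos rfl]; exact occ_le_one (CN4_scope_inj r r' k G' i) _
              · rw [if_neg h]
                exact occ_le_zero (by
                  simp only [CN4]
                  exact gsc_ne (by simp [h]) (by simp) (fun j => by simp))
            have h5 : psumR r r' k G i 0 (vZ r r' k i₀ 1) = 0 :=
              psumR_eq_zero r r' k G (fun j => by simp)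
            have h6 : psumR' r r' k G' i 0 (vZ r r' k i₀ 1) = 0 :=
              psumR'_eq_zero r r' k G' (fun j => by simp)
            have h7 : psumR r r' k G i 1 (vZ r r' k i₀ 1) = 0 :=
              psumR_eq_zero r r' k G (fun j => by simp)
            have h8 : psumR' r r' k G' i 1 (vZ r r' k i₀ 1) = 0 :=
              psumR'_eq_zero r r' k G' (fun j => by simp)
            rw [h1, h2, h5, h6, h7, h8]
            simpa using add_le_add h3 h4
          refine le_trans (Finset.sum_le_sum fun i _ => hb i) ?_
          rw [Finset.sum_add_distrib, sum_ite_fin]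
      -- case v = vW i₀ g₀ jj
      · subst hv'
        rcases jj with j₀ | j₀
        all_goals rcases fin2_cases g₀ with rfl | rfl
        -- inl j₀, g₀ = 0 : CO2 and psumR _ 0
        · have hb : ∀ i : Fin k, ((gadgetL r r' k G G' i).map
              fun c => occ c (vW r r' k i₀ 0 (Sum.inl j₀))).sum
              ≤ (if i = i₀ then 1 else 0) + (if i = i₀ then 1 else 0) := by
            intro i
            rw [dgl_eq]
            have h1 : occ (CN1 r r' k G' i) (vW r r' k i₀ 0 (Sum.inl j₀)) = 0 :=
              occ_eq_zero (by
                simp only [CN1]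
                exact gsc_ne (by simp) (by simp) (fun j => by simp))
            have h2 : occ (CO2 r r' k G i) (vW r r' k i₀ 0 (Sum.inl j₀)) ≤
                if i = i₀ then 1 else 0 := by
              by_cases h : i = i₀
              · subst h; rw [if_pos rfl]; exact occ_le_one (CO2_scope_inj r r' k G i) _
              · rw [if_neg h]
                exact occ_le_zero (by
                  simp only [CO2]
                  exact gsc_ne (by simp) (by simp) (fun j => by simp [h]))
            have h3 : occ (CO3 r r' k G i) (vW r r' k i₀ 0 (Sum.inl j₀)) = 0 :=
              occ_eq_zero (by
                simp only [CO3]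
                exact gsc_ne (by simp) (by simp) (fun j => by simp [fin2_one_ne_zero, fin2_zero_ne_one]))
            have h4 : occ (CN4 r r' k G' i) (vW r r' k i₀ 0 (Sum.inl j₀)) = 0 :=
              occ_eq_zero (by
                simp only [CN4]
                exact gsc_ne (by simp) (by simp) (fun j => by simp))
            have h5 : psumR r r' k G i 0 (vW r r' k i₀ 0 (Sum.inl j₀)) ≤
                if i = i₀ then 1 else 0 := by
              by_cases h : i = i₀
              · subst h; rw [if_pos rfl]; exact psumR_le_one r r' k G _ _ _
              · rw [if_neg h]
                exact psumR_le_zero r r' k G (fun j => by simp [h])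
            have h6 : psumR' r r' k G' i 0 (vW r r' k i₀ 0 (Sum.inl j₀)) = 0 :=
              psumR'_eq_zero r r' k G' (fun j => by simp)
            have h7 : psumR r r' k G i 1 (vW r r' k i₀ 0 (Sum.inl j₀)) = 0 :=
              psumR_eq_zero r r' k G (fun j => by simp [fin2_one_ne_zero, fin2_zero_ne_one])
            have h8 : psumR' r r' k G' i 1 (vW r r' k i₀ 0 (Sum.inl j₀)) = 0 :=
              psumR'_eq_zero r r' k G' (fun j => by simp)
            rw [h1, h3, h4, h6, h7, h8]
            simpa using add_le_add h2 h5
          refine le_trans (Finset.sum_le_sum fun i _ => hb i) ?_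
          rw [Finset.sum_add_distrib, sum_ite_fin]
        -- inl j₀, g₀ = 1 : CO3 and psumR _ 1
        · have hb : ∀ i : Fin k, ((gadgetL r r' k G G' i).map
              fun c => occ c (vW r r' k i₀ 1 (Sum.inl j₀))).sum
              ≤ (if i = i₀ then 1 else 0) + (if i = i₀ then 1 else 0) := by
            intro i
            rw [dgl_eq]
            have h1 : occ (CN1 r r' k G' i) (vW r r' k i₀ 1 (Sum.inl j₀)) = 0 :=
              occ_eq_zero (by
                simp only [CN1]
                exact gsc_ne (by simp) (by simp) (fun j => by simp))
            have h2 : occ (CO2 r r' k G i) (vW r r' k i₀ 1 (Sum.inl j₀)) = 0 :=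
              occ_eq_zero (by
                simp only [CO2]
                exact gsc_ne (by simp) (by simp) (fun j => by simp [fin2_one_ne_zero, fin2_zero_ne_one]))
            have h3 : occ (CO3 r r' k G i) (vW r r' k i₀ 1 (Sum.inl j₀)) ≤
                if i = i₀ then 1 else 0 := by
              by_cases h : i = i₀
              · subst h; rw [if_pos rfl]; exact occ_le_one (CO3_scope_inj r r' k G i) _
              · rw [if_neg h]
                exact occ_le_zero (by
                  simp only [CO3]
                  exact gsc_ne (by simp) (by simp) (fun j => by simp [h]))
            have h4 : occ (CN4 r r' k G' i) (vW r r' k i₀ 1 (Sum.inl j₀)) = 0 :=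
              occ_eq_zero (by
                simp only [CN4]
                exact gsc_ne (by simp) (by simp) (fun j => by simp))
            have h5 : psumR r r' k G i 0 (vW r r' k i₀ 1 (Sum.inl j₀)) = 0 :=
              psumR_eq_zero r r' k G (fun j => by simp [fin2_one_ne_zero, fin2_zero_ne_one])
            have h6 : psumR' r r' k G' i 0 (vW r r' k i₀ 1 (Sum.inl j₀)) = 0 :=
              psumR'_eq_zero r r' k G' (fun j => by simp)
            have h7 : psumR r r' k G i 1 (vW r r' k i₀ 1 (Sum.inl j₀)) ≤
                if i = i₀ then 1 else 0 := by
              by_cases h : i = i₀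
              · subst h; rw [if_pos rfl]; exact psumR_le_one r r' k G _ _ _
              · rw [if_neg h]
                exact psumR_le_zero r r' k G (fun j => by simp [h])
            have h8 : psumR' r r' k G' i 1 (vW r r' k i₀ 1 (Sum.inl j₀)) = 0 :=
              psumR'_eq_zero r r' k G' (fun j => by simp)
            rw [h1, h2, h4, h5, h6, h8]
            simpa using add_le_add h3 h7
          refine le_trans (Finset.sum_le_sum fun i _ => hb i) ?_
          rw [Finset.sum_add_distrib, sum_ite_fin]
        -- inr j₀, g₀ = 0 : CN1 and psumR' _ 0
        · have hb : ∀ i : Fin k, ((gadgetL r r' k G G' i).map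
              fun c => occ c (vW r r' k i₀ 0 (Sum.inr j₀))).sum
              ≤ (if i = i₀ then 1 else 0) + (if i = i₀ then 1 else 0) := by
            intro i
            rw [dgl_eq]
            have h1 : occ (CN1 r r' k G' i) (vW r r' k i₀ 0 (Sum.inr j₀)) ≤
                if i = i₀ then 1 else 0 := by
              by_cases h : i = i₀
              · subst h; rw [if_pos rfl]; exact occ_le_one (CN1_scope_inj r r' k G' i) _
              · rw [if_neg h]
                exact occ_le_zero (by
                  simp only [CN1]
                  exact gsc_ne (by simp) (by simp) (fun j => by simp [h]))
            have h2 : occ (CO2 r r' k G i) (vW r r' k i₀ 0 (Sum.inr j₀)) = 0 :=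
              occ_eq_zero (by
                simp only [CO2]
                exact gsc_ne (by simp) (by simp) (fun j => by simp))
            have h3 : occ (CO3 r r' k G i) (vW r r' k i₀ 0 (Sum.inr j₀)) = 0 :=
              occ_eq_zero (by
                simp only [CO3]
                exact gsc_ne (by simp) (by simp) (fun j => by simp))
            have h4 : occ (CN4 r r' k G' i) (vW r r' k i₀ 0 (Sum.inr j₀)) = 0 :=
              occ_eq_zero (by
                simp only [CN4]
                exact gsc_ne (by simp) (by simp) (fun j => by simp [fin2_one_ne_zero, fin2_zero_ne_one]))
            have h5 : psumR r r' k G i 0 (vW r r' k i₀ 0 (Sum.inr j₀)) = 0 :=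
              psumR_eq_zero r r' k G (fun j => by simp)
            have h6 : psumR' r r' k G' i 0 (vW r r' k i₀ 0 (Sum.inr j₀)) ≤
                if i = i₀ then 1 else 0 := by
              by_cases h : i = i₀
              · subst h; rw [if_pos rfl]; exact psumR'_le_one r r' k G' _ _ _
              · rw [if_neg h]
                exact psumR'_le_zero r r' k G' (fun j => by simp [h])
            have h7 : psumR r r' k G i 1 (vW r r' k i₀ 0 (Sum.inr j₀)) = 0 :=
              psumR_eq_zero r r' k G (fun j => by simp)
            have h8 : psumR' r r' k G' i 1 (vW r r' k i₀ 0 (Sum.inr j₀)) = 0 :=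
              psumR'_eq_zero r r' k G' (fun j => by simp [fin2_one_ne_zero, fin2_zero_ne_one])
            rw [h2, h3, h4, h5, h7, h8]
            simpa using add_le_add h1 h6
          refine le_trans (Finset.sum_le_sum fun i _ => hb i) ?_
          rw [Finset.sum_add_distrib, sum_ite_fin]
        -- inr j₀, g₀ = 1 : CN4 and psumR' _ 1
        · have hb : ∀ i : Fin k, ((gadgetL r r' k G G' i).map
              fun c => occ c (vW r r' k i₀ 1 (Sum.inr j₀))).sum
              ≤ (if i = i₀ then 1 else 0) + (if i = i₀ then 1 else 0) := by
            intro i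
            rw [dgl_eq]
            have h1 : occ (CN1 r r' k G' i) (vW r r' k i₀ 1 (Sum.inr j₀)) = 0 :=
              occ_eq_zero (by
                simp only [CN1]
                exact gsc_ne (by simp) (by simp) (fun j => by simp [fin2_one_ne_zero, fin2_zero_ne_one]))
            have h2 : occ (CO2 r r' k G i) (vW r r' k i₀ 1 (Sum.inr j₀)) = 0 :=
              occ_eq_zero (by
                simp only [CO2]
                exact gsc_ne (by simp) (by simp) (fun j => by simp))
            have h3 : occ (CO3 r r' k G i) (vW r r' k i₀ 1 (Sum.inr j₀)) = 0 :=
              occ_eq_zero (by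
                simp only [CO3]
                exact gsc_ne (by simp) (by simp) (fun j => by simp))
            have h4 : occ (CN4 r r' k G' i) (vW r r' k i₀ 1 (Sum.inr j₀)) ≤
                if i = i₀ then 1 else 0 := by
              by_cases h : i = i₀
              · subst h; rw [if_pos rfl]; exact occ_le_one (CN4_scope_inj r r' k G' i) _
              · rw [if_neg h]
                exact occ_le_zero (by
                  simp only [CN4]
                  exact gsc_ne (by simp) (by simp) (fun j => by simp [h]))
            have h5 : psumR r r' k G i 0 (vW r r' k i₀ 1 (Sum.inr j₀)) = 0 :=
              psumR_eq_zero r r' k G (fun j => by simp)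
            have h6 : psumR' r r' k G' i 0 (vW r r' k i₀ 1 (Sum.inr j₀)) = 0 :=
              psumR'_eq_zero r r' k G' (fun j => by simp [fin2_one_ne_zero, fin2_zero_ne_one])
            have h7 : psumR r r' k G i 1 (vW r r' k i₀ 1 (Sum.inr j₀)) = 0 :=
              psumR_eq_zero r r' k G (fun j => by simp)
            have h8 : psumR' r r' k G' i 1 (vW r r' k i₀ 1 (Sum.inr j₀)) ≤
                if i = i₀ then 1 else 0 := by
              by_cases h : i = i₀
              · subst h; rw [if_pos rfl]; exact psumR'_le_one r r' k G' _ _ _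
              · rw [if_neg h]
                exact psumR'_le_zero r r' k G' (fun j => by simp [h])
            rw [h1, h2, h3, h5, h6, h7]
            simpa using add_le_add h4 h8
          refine le_trans (Finset.sum_le_sum fun i _ => hb i) ?_
          rw [Finset.sum_add_distrib, sum_ite_fin]

lemma inst_over :
    (Inst r r' k G G').over (({⟨r, R⟩, ⟨r', R'⟩} : Set (Σ n, BoolRel n)) ∪ pinLang) := by
  intro c hc
  obtain ⟨i, -, hci⟩ := List.mem_flatMap.1 hc
  simp only [gadgetL, List.mem_append, List.mem_cons, List.not_mem_nil, or_false] at hci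
  have hpin : ∀ (cc : Bool) (u : Fin (lenV r r' k)),
      (⟨(pinC cc u).arity, (pinC cc u).rel⟩ : Σ n, BoolRel n) ∈
        (({⟨r, R⟩, ⟨r', R'⟩} : Set (Σ n, BoolRel n)) ∪ pinLang) := by
    intro cc u
    cases cc
    · exact Or.inr (Or.inl rfl)
    · exact Or.inr (Or.inr rfl)
  rcases hci with ((((rfl | rfl | rfl | rfl) | hp) | hp) | hp) | hp
  · exact Or.inl (Or.inr rfl)
  · exact Or.inl (Or.inl rfl)
  · exact Or.inl (Or.inl rfl)
  · exact Or.inl (Or.inr rfl)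
  all_goals
    obtain ⟨j, -, hj⟩ := List.mem_filterMap.1 hp
  all_goals
    obtain ⟨cc, hcc, rfl⟩ := Option.map_eq_some_iff.1 hj
  all_goals
    exact hpin cc _

end Construction

lemma constr_main {r r' : ℕ} {R : BoolRel r} {R' : BoolRel r'}
    (G : PGadget r R ROR) (G' : PGadget r' R' RNAND) (k : ℕ) (hk : 2 ≤ k) :
    simulatesEqK ({⟨r, R⟩, ⟨r', R'⟩} : Set (Σ n, BoolRel n)) 3 k := by
  haveI : NeZero k := ⟨by omega⟩
  refine ⟨lenV r r' k, Nat.le_add_right _ _, Inst r r' k G G',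
    inst_over r r' k G G', ?_, ?_, ?_⟩
  · intro v
    exact le_trans (degree_le r r' k G G' v) (by omega)
  · intro v _
    exact le_trans (degree_le r r' k G G' v) (by omega)
  · -- counting part
    -- witnesses for the four boundary tuples
    have h10 : (fun m : Fin 2 => if m = 0 then true else false) ∈ ROR := by
      simp [ROR]
    have h01 : (fun m : Fin 2 => if m = 0 then false else true) ∈ ROR := by
      simp [ROR, fin2_one_ne_zero]
    have hN01 : (fun m : Fin 2 => if m = 0 then false else true) ∈ RNAND := by
      simp [RNAND]
    have hN10 : (fun m : Fin 2 => if m = 0 then true else false) ∈ RNAND := by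
      simp [RNAND, fin2_one_ne_zero]
    obtain ⟨b1, hb1, hb1p, hb1e⟩ := (G.spec _).1 h10
    obtain ⟨b2, hb2, hb2p, hb2e⟩ := (G.spec _).1 h01
    obtain ⟨b3, hb3, hb3p, hb3e⟩ := (G'.spec _).1 hN01
    obtain ⟨b4, hb4, hb4p, hb4e⟩ := (G'.spec _).1 hN10
    have hσ0sat : SatAll r r' k G G' (sigma0 r r' k b1 b2 b3 b4) :=
      sigma0_satAll r r' k G G' b1 b2 b3 b4
        hb1 hb1p ((hb1e 0).trans (if_pos rfl)) ((hb1e 1).trans (if_neg fin2_one_ne_zero))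
        hb2 hb2p ((hb2e 0).trans (if_pos rfl)) ((hb2e 1).trans (if_neg fin2_one_ne_zero))
        hb3 hb3p ((hb3e 0).trans (if_pos rfl)) ((hb3e 1).trans (if_neg fin2_one_ne_zero))
        hb4 hb4p ((hb4e 0).trans (if_pos rfl)) ((hb4e 1).trans (if_neg fin2_one_ne_zero))
    -- the two solution classes are in bijection
    have E : {σ : Fin (lenV r r' k) → Bool |
          (Inst r r' k G G').sat σ ∧ ∀ v : Fin (lenV r r' k), (v : ℕ) < k → σ v = false} ≃
        {σ : Fin (lenV r r' k) → Bool |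
          (Inst r r' k G G').sat σ ∧ ∀ v : Fin (lenV r r' k), (v : ℕ) < k → σ v = true} := by
      refine ⟨fun σp => ⟨Fmap r r' k σp.1, ?_, ?_⟩, fun σp => ⟨Gmap r r' k σp.1, ?_, ?_⟩,
        ?_, ?_⟩
      · exact (sat_iff r r' k G G' _).2 (Fmap_satAll r r' k G G'
          ((sat_iff r r' k G G' _).1 σp.2.1)
          ((cond_iff_false r r' k _).1 σp.2.2))
      · exact (cond_iff_true r r' k _).2 (fun i => Fmap_vX r r' k i)
      · exact (sat_iff r r' k G G' _).2 (Gmap_satAll r r' k G G'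
          ((sat_iff r r' k G G' _).1 σp.2.1)
          ((cond_iff_true r r' k _).1 σp.2.2))
      · exact (cond_iff_false r r' k _).2 (fun i => Gmap_vX r r' k i)
      · intro σp
        exact Subtype.ext (Gmap_Fmap r r' k G G'
          ((sat_iff r r' k G G' _).1 σp.2.1) ((cond_iff_false r r' k _).1 σp.2.2))
      · intro σp
        exact Subtype.ext (Fmap_Gmap r r' k G G'
          ((sat_iff r r' k G G' _).1 σp.2.1) ((cond_iff_true r r' k _).1 σp.2.2))
    refine ⟨Nat.card {σ : Fin (lenV r r' k) → Bool |
        (Inst r r' k G G').sat σ ∧ ∀ v : Fin (lenV r r' k), (v : ℕ) < k → σ v = false},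
      ?_, rfl, (Nat.card_congr E).symm, ?_⟩
    · -- positivity
      haveI hne : Nonempty {σ : Fin (lenV r r' k) → Bool |
          (Inst r r' k G G').sat σ ∧ ∀ v : Fin (lenV r r' k), (v : ℕ) < k → σ v = false} := by
        refine ⟨⟨sigma0 r r' k b1 b2 b3 b4, ?_, ?_⟩⟩
        · exact (sat_iff r r' k G G' _).2 hσ0sat
        · exact (cond_iff_false r r' k _).2 (fun i => sigma0_vX r r' k i)
      exact Nat.card_pos
    · -- dichotomy
      intro σ hσ
      rcases dichotomy r r' k G G' ((sat_iff r r' k G G' _).1 hσ) with h | h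
      · exact Or.inl ((cond_iff_false r r' k _).2 h)
      · exact Or.inr ((cond_iff_true r r' k _).2 h)

/-- If `R_OR ≤ppp R` and `R_NAND ≤ppp R'`, then `{R, R'}` 3-simulates equality. -/
theorem simulates_equality_of_OR_and_NAND (r r' : ℕ) (R : BoolRel r) (R' : BoolRel r')
    (hOR : pppLE ROR R) (hNAND : pppLE RNAND R') :
    simulatesEq ({⟨r, R⟩, ⟨r', R'⟩} : Set (Σ n, BoolRel n)) 3 := by
  intro k hk
  have htuOR : ∀ (m : Fin 2) (c : Bool), ∃ a ∈ ROR, a m = c := by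
    intro m c
    refine ⟨fun x => if x = m then c else true, ?_, by simp⟩
    rcases fin2_cases m with rfl | rfl <;> cases c <;>
      simp [ROR, fin2_one_ne_zero, fin2_zero_ne_one]
  have htuNAND : ∀ (m : Fin 2) (c : Bool), ∃ a ∈ RNAND, a m = c := by
    intro m c
    refine ⟨fun x => if x = m then c else false, ?_, by simp⟩
    rcases fin2_cases m with rfl | rfl <;> cases c <;>
      simp [RNAND, fin2_one_ne_zero, fin2_zero_ne_one]
  obtain ⟨G⟩ := gadget_exists hOR htuOR
  obtain ⟨G'⟩ := gadget_exists hNAND htuNAND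
  exact constr_main G G' k hk
end

section
/- If R is an IM-conj Boolean relation that is not affine, then R_→ ≤ppp R. -/
def restrictRel {r s : ℕ} (R : BoolRel r) (f : Fin s → Fin r) : BoolRel s :=
  {a | ∃ b ∈ R, a = fun j => b (f j)}

lemma pppLE_restrictRel_of_bij {s r : ℕ} (R : BoolRel r) (f : Fin s → Fin r)
    (hf : Function.Bijective f) :
    Relation.ReflTransGen pppStep ⟨r, R⟩ ⟨s, restrictRel R f⟩ := by
  have hsr : s = r := by
    have := Fintype.card_congr (Equiv.ofBijective f hf)
    simpa using this
  subst hsr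
  set e := Equiv.ofBijective f hf with he
  have hfe : ∀ x, f x = e x := fun x => rfl
  have hset : restrictRel R f = {a | (fun i => a (e.symm i)) ∈ R} := by
    ext a
    constructor
    · rintro ⟨b, hb, rfl⟩
      have hb' : (fun i => (fun j => b (f j)) (e.symm i)) = b := by
        funext i
        simp [hfe]
      rw [Set.mem_setOf_eq, hb']
      exact hb
    · intro ha
      exact ⟨fun i => a (e.symm i), ha, by funext j; simp [hfe]⟩
  rw [hset]
  exact Relation.ReflTransGen.single (pppStep.perm R e.symm)

lemma pppLE_restrictRel {s : ℕ} :
    ∀ (r : ℕ) (R : BoolRel r) (f : Fin s → Fin r), Function.Injective f →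
      Relation.ReflTransGen pppStep ⟨r, R⟩ ⟨s, restrictRel R f⟩ := by
  intro r
  induction r with
  | zero =>
    intro R f hf
    exact pppLE_restrictRel_of_bij R f ⟨hf, fun y => y.elim0⟩
  | succ r ih =>
    intro R f hf
    by_cases hs : Function.Surjective f
    · exact pppLE_restrictRel_of_bij R f ⟨hf, hs⟩
    · rw [Function.Surjective] at hs
      push_neg at hs
      obtain ⟨k, hk⟩ := hs
      have hex : ∀ j, ∃ x, k.succAbove x = f j := fun j =>
        Fin.exists_succAbove_eq (hk j)
      choose g hgspec using hex
      have hginj : Function.Injective g := by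
        intro x y hxy
        apply hf
        rw [← hgspec x, ← hgspec y, hxy]
      have hset : restrictRel R f = restrictRel (restrictRel R (Fin.succAbove k)) g := by
        ext a
        constructor
        · rintro ⟨b, hb, rfl⟩
          exact ⟨fun j => b (k.succAbove j), ⟨b, hb, rfl⟩, by funext t; simp [hgspec]⟩
        · rintro ⟨c, ⟨b, hb, rfl⟩, rfl⟩
          exact ⟨b, hb, by funext t; simp [hgspec]⟩
      rw [hset]
      exact Relation.ReflTransGen.head (pppStep.proj R k) (ih _ g hginj)

/-- If `R` is IM-conj but not affine, then `R₍→₎ ≤ppp R`. -/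
theorem imp_ppp_of_IMconj_not_affine (r : ℕ) (R : BoolRel r)
    (him : IMConj R) (haff : ¬ AffineRel R) :
    pppLE Rimp R := by
  classical
  obtain ⟨P, Imp, hdef⟩ := him
  by_cases hG : ∃ i j : Fin r, (∀ a ∈ R, a i = true → a j = true) ∧
      (∃ a ∈ R, a i = false ∧ a j = true) ∧ (∃ a ∈ R, a i = true) ∧ (∃ a ∈ R, a j = false)
  · obtain ⟨i, j, h10, h01, h1, h0⟩ := hG
    have hij : i ≠ j := by
      rintro rfl
      obtain ⟨b, -, hb1, hb2⟩ := h01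
      rw [hb1] at hb2
      exact Bool.false_ne_true hb2
    set f : Fin 2 → Fin r := ![i, j] with hf
    have hinj : Function.Injective f := by
      intro x y hxy
      fin_cases x <;> fin_cases y <;>
        simp only [hf, Fin.isValue, Matrix.cons_val_zero, Matrix.cons_val_one,
          Matrix.head_cons] at hxy <;>
      first
        | rfl
        | exact absurd hxy hij
        | exact absurd hxy.symm hij
    have hset : Rimp = restrictRel R f := by
      ext a
      simp only [Rimp, restrictRel, Set.mem_setOf_eq]
      constructor
      · intro ha
        cases h0' : a 0 <;> cases h1' : a 1
        · obtain ⟨b, hbR, hbj⟩ := h0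
          have hbi : b i = false := by
            cases hbi : b i
            · rfl
            · rw [h10 b hbR hbi] at hbj; exact absurd hbj (by simp)
          exact ⟨b, hbR, by funext t; fin_cases t <;> simp [hf, h0', h1', hbi, hbj]⟩
        · obtain ⟨b, hbR, hbi, hbj⟩ := h01
          exact ⟨b, hbR, by funext t; fin_cases t <;> simp [hf, h0', h1', hbi, hbj]⟩
        · rw [ha h0'] at h1'; exact absurd h1' (by simp)
        · obtain ⟨b, hbR, hbi⟩ := h1
          have hbj := h10 b hbR hbi
          exact ⟨b, hbR, by funext t; fin_cases t <;> simp [hf, h0', h1', hbi, hbj]⟩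
      · rintro ⟨b, hbR, rfl⟩
        intro h0'
        simp only [hf] at h0' ⊢
        simp only [Matrix.cons_val_zero] at h0'
        simp only [Matrix.cons_val_one, Matrix.head_cons]
        exact h10 b hbR h0'
    rw [pppLE, hset]
    exact pppLE_restrictRel r R f hinj
  · exfalso
    apply haff
    refine ⟨{e | (∃ i, e.1 = {i} ∧ ∀ b ∈ R, b i = e.2) ∨
        (∃ i j, i ≠ j ∧ e.1 = {i, j} ∧ e.2 = false ∧ ∀ b ∈ R, b i = b j)}, fun a => ?_⟩
    constructor
    · intro haR e he
      rcases he with ⟨i, h1, h2⟩ | ⟨i, j, hij, h1, h2, h3⟩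
      · rw [h1, Finset.sum_singleton, h2 a haR]
      · rw [h1, h2, Finset.sum_pair hij, h3 a haR]
        cases a j <;> simp <;> decide
    · intro h
      have hsing : ∀ (i : Fin r) (c : Bool), (∀ b ∈ R, b i = c) → a i = c := by
        intro i c hc
        have := h ({i}, c) (Or.inl ⟨i, rfl, hc⟩)
        rw [Finset.sum_singleton] at this
        cases hai : a i <;> cases c <;> simp [hai] at this ⊢ <;>
          exact absurd this (by decide)
      have hpair : ∀ (i j : Fin r), (∀ b ∈ R, b i = b j) → a i = a j := by
        intro i j hc
        by_cases hij : i = j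
        · rw [hij]
        · have := h ({i, j}, false) (Or.inr ⟨i, j, hij, rfl, rfl, hc⟩)
          rw [Finset.sum_pair hij] at this
          cases hai : a i <;> cases haj : a j <;> simp [hai, haj] at this ⊢ <;>
            exact absurd this (by decide)
      rw [hdef a]
      refine ⟨fun p hp => hsing p.1 p.2 (fun b hb => ((hdef b).1 hb).1 p hp), ?_⟩
      intro q hq hq1
      have himp : ∀ b ∈ R, b q.1 = true → b q.2 = true := fun b hb =>
        ((hdef b).1 hb).2 q hq
      by_cases hB : ∃ b ∈ R, b q.1 = false ∧ b q.2 = true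
      · by_cases hC : ∃ b ∈ R, b q.1 = true
        · by_cases hD : ∃ b ∈ R, b q.2 = false
          · exact absurd ⟨q.1, q.2, himp, hB, hC, hD⟩ hG
          · push_neg at hD
            exact hsing q.2 true (fun b hb => by
              cases hbj : b q.2
              · exact absurd hbj (hD b hb)
              · rfl)
        · push_neg at hC
          have hia : a q.1 = false := hsing q.1 false (fun b hb => by
            cases hbi : b q.1
            · rfl
            · exact absurd hbi (hC b hb))
          rw [hq1] at hia
          exact absurd hia (by simp)
      · push_neg at hB
        have heq : ∀ b ∈ R, b q.1 = b q.2 := by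
          intro b hb
          cases hbi : b q.1
          · cases hbj : b q.2
            · rfl
            · exact absurd hbj (hB b hb hbi)
          · rw [himp b hb hbi]
        have := hpair q.1 q.2 heq
        rw [← this, hq1]
end

section
/- If R ≤ppp R' for Boolean relations R and R', then R can be obtained from R' in normal form: first applying a single permutation of columns, then a sequence of pinnings, and then a sequence of projections. -/
/-- Normal form predicate: `S` is definable from `R'` by one permutation,
pins `P`, and keeping an order-embedded subset of columns. -/
def NFform (r' : ℕ) (R' : BoolRel r') (S : Σ s, BoolRel s) : Prop :=
  ∃ (π : Equiv.Perm (Fin r')) (P : Set (Fin r' × Bool)) (keep : Fin S.1 ↪o Fin r'),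
    S.2 = {a | ∃ b : Fin r' → Bool,
      ((fun i => b (π i)) ∈ R') ∧ (∀ p ∈ P, b p.1 = p.2) ∧ a = fun j => b (keep j)}

lemma NFform_step {r' : ℕ} {R' : BoolRel r'} {S T : Σ s, BoolRel s}
    (hst : pppStep S T) (hS : NFform r' R' S) : NFform r' R' T := by
  cases hst with
  | perm Rel σ =>
    obtain ⟨π, P, keep, hR⟩ := hS
    dsimp only at keep hR
    let τ : Equiv.Perm (Fin r') := Equiv.Perm.viaFintypeEmbedding σ⁻¹ keep.toEmbedding
    have hτ : ∀ j, τ (keep j) = keep (σ⁻¹ j) := fun j =>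
      Equiv.Perm.viaFintypeEmbedding_apply_image σ⁻¹ keep.toEmbedding j
    refine ⟨π.trans τ.symm, (fun p => (τ.symm p.1, p.2)) '' P, keep, ?_⟩
    rw [hR]
    ext a
    simp only [Set.mem_setOf_eq]
    constructor
    · rintro ⟨b, hb1, hb2, hb3⟩
      refine ⟨fun x => b (τ x), ?_, ?_, ?_⟩
      · have : (fun i => b (τ (τ.symm (π i)))) = fun i => b (π i) := by
          funext i; rw [Equiv.apply_symm_apply]
        simpa [Equiv.trans_apply] using this ▸ hb1
      · rintro p ⟨q, hq, rfl⟩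
        simpa [Equiv.apply_symm_apply] using hb2 q hq
      · funext j
        have h1 : a (σ (σ⁻¹ j)) = b (keep (σ⁻¹ j)) := congrFun hb3 (σ⁻¹ j)
        simpa [hτ j] using (by simpa using h1 : a j = b (keep (σ⁻¹ j)))
    · rintro ⟨b', hb1, hb2, hb3⟩
      refine ⟨fun x => b' (τ.symm x), ?_, ?_, ?_⟩
      · simpa [Equiv.trans_apply] using hb1
      · intro q hq
        exact hb2 (τ.symm q.1, q.2) ⟨q, hq, rfl⟩
      · funext j
        have h1 : a (σ j) = b' (keep (σ j)) := congrFun hb3 (σ j)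
        have h2 : τ.symm (keep j) = keep (σ j) := by
          apply τ.injective; rw [Equiv.apply_symm_apply, hτ]; simp
        rw [h1, ← h2]
  | pin Rel i c =>
    obtain ⟨π, P, keep, hR⟩ := hS
    dsimp only at keep hR
    refine ⟨π, insert (keep i, c) P, keep, ?_⟩
    rw [hR]
    ext a
    simp only [Set.mem_setOf_eq]
    constructor
    · rintro ⟨⟨b, hb1, hb2, hb3⟩, hac⟩
      refine ⟨b, hb1, ?_, hb3⟩
      rintro p (rfl | hp)
      · have := congrFun hb3 i; rw [← this]; exact hac
      · exact hb2 p hp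
    · rintro ⟨b, hb1, hb2, hb3⟩
      refine ⟨⟨b, hb1, fun p hp => hb2 p (Set.mem_insert_iff.mpr (Or.inr hp)), hb3⟩, ?_⟩
      have := congrFun hb3 i
      rw [this]
      exact hb2 (keep i, c) (Set.mem_insert _ _)
  | proj Rel i =>
    obtain ⟨π, P, keep, hR⟩ := hS
    dsimp only at keep hR
    refine ⟨π, P, (Fin.succAboveOrderEmb i).trans keep, ?_⟩
    rw [hR]
    ext a
    simp only [Set.mem_setOf_eq]
    constructor
    · rintro ⟨bb, ⟨b, hb1, hb2, hb3⟩, rfl⟩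
      exact ⟨b, hb1, hb2, by funext j; rw [congrFun hb3 (i.succAbove j)]; rfl⟩
    · rintro ⟨b, hb1, hb2, rfl⟩
      exact ⟨fun j => b (keep j), ⟨b, hb1, hb2, rfl⟩, rfl⟩

lemma NFform_of_rtg {r' : ℕ} {R' : BoolRel r'} {S : Σ s, BoolRel s}
    (h : Relation.ReflTransGen pppStep ⟨r', R'⟩ S) : NFform r' R' S := by
  induction h with
  | refl =>
    refine ⟨Equiv.refl _, ∅, OrderEmbedding.ofStrictMono id fun _ _ h => h, ?_⟩
    ext a
    simp only [Set.mem_setOf_eq, Set.mem_empty_iff_false]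
    constructor
    · intro ha; exact ⟨a, ha, by simp, rfl⟩
    · rintro ⟨b, hb1, _, rfl⟩; exact hb1
  | tail _ hstep ih => exact NFform_step hstep ih

/-- Normal form for ppp-definability: if `R ≤ppp R'` then `R` is obtained from `R'`
by first permuting the columns, then making some pins, and then projecting (i.e.
keeping a subset of the columns, in order). -/
theorem pppLE_normal_form (r r' : ℕ) (R : BoolRel r) (R' : BoolRel r')
    (h : pppLE R R') :
    ∃ (π : Equiv.Perm (Fin r')) (P : Set (Fin r' × Bool)) (keep : Fin r ↪o Fin r'),
      R = {a | ∃ b : Fin r' → Bool,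
        ((fun i => b (π i)) ∈ R') ∧ (∀ p ∈ P, b p.1 = p.2) ∧ a = fun j => b (keep j)} := by
  obtain ⟨π, P, keep, hR⟩ := NFform_of_rtg h
  exact ⟨π, P, keep, hR⟩
end

section
/- Let R_0 ⊆ R_1 be r-ary OR-conj relations such that the (r+1)-ary relation R = R_0 + R_1 has no constant columns and every constant column of R_0 is constant with value 1. Then R is an OR-conj relation. -/
/-- If `R₀ ⊆ R₁` are `r`-ary OR-conj relations, `R₀ + R₁` has no constant columns and
every constant column of `R₀` is constant with value 1, then `R₀ + R₁` is OR-conj. -/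
theorem relSum_ORconj_of_subset (r : ℕ) (R0 R1 : BoolRel r)
    (h0 : ORConj R0) (h1 : ORConj R1) (hsub : R0 ⊆ R1)
    (hnc : ∀ i : Fin (r + 1), ¬ constCol (relSum R0 R1) i)
    (hones : ∀ i : Fin r, constCol R0 i → ∀ a ∈ R0, a i = true) :
    ORConj (relSum R0 R1) := by

  obtain ⟨P1, Cl1, hCl1ne, hIff1⟩ := h1
  obtain ⟨P0, Cl0, hCl0ne, hIff0⟩ := h0
  -- R0 is nonempty
  have hnc0 := hnc 0
  rw [constCol] at hnc0
  push_neg at hnc0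
  obtain ⟨a, ha, b, hb, hab⟩ := hnc0
  have hR0ne : ∃ x, x ∈ R0 := by
    rcases ha with ⟨ha0, haR⟩ | ⟨ha0, haR⟩
    · exact ⟨_, haR⟩
    · rcases hb with ⟨hb0, hbR⟩ | ⟨hb0, hbR⟩
      · exact ⟨_, hbR⟩
      · rw [ha0, hb0] at hab; exact absurd rfl hab
  obtain ⟨x0, hx0⟩ := hR0ne
  -- all pins in P0 pin to true
  have hP0true : ∀ p ∈ P0, p.2 = true := by
    intro p hp
    by_contra h
    have hfalse : p.2 = false := by cases hb : p.2 <;> simp_all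
    have hcc : constCol R0 p.1 := by
      intro u hu v hv
      have h1 := ((hIff0 u).1 hu).1 p hp
      have h2 := ((hIff0 v).1 hv).1 p hp
      rw [h1, h2]
    have h3 := hones p.1 hcc x0 hx0
    have h4 := ((hIff0 x0).1 hx0).1 p hp
    rw [hfalse] at h4
    rw [h3] at h4
    exact absurd h4 (by simp)
  refine ⟨{q | ∃ p ∈ P1, q = (p.1.succ, p.2)},
    ({D | ∃ C ∈ Cl1, D = Fin.succ '' C} ∪
     {D | ∃ C ∈ Cl0, D = insert 0 (Fin.succ '' C)}) ∪
    {D | ∃ p ∈ P0, D = {0, p.1.succ}}, ?_, ?_⟩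
  · rintro C ((⟨C', hC', rfl⟩ | ⟨C', hC', rfl⟩) | ⟨p, hp, rfl⟩)
    · obtain ⟨i, hi⟩ := hCl1ne C' hC'
      exact ⟨i.succ, ⟨i, hi, rfl⟩⟩
    · exact ⟨0, Set.mem_insert _ _⟩
    · exact ⟨0, by simp⟩
  · intro a
    constructor
    · rintro (⟨h0', haR⟩ | ⟨h0', haR⟩)
      · -- a 0 = false, tail in R0
        have haR1 : (fun i => a i.succ) ∈ R1 := hsub haR
        obtain ⟨hp1, hc1⟩ := (hIff1 _).1 haR1
        obtain ⟨hp0, hc0⟩ := (hIff0 _).1 haR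
        refine ⟨?_, ?_⟩
        · rintro q ⟨p, hp, rfl⟩
          exact hp1 p hp
        · rintro C ((⟨C', hC', rfl⟩ | ⟨C', hC', rfl⟩) | ⟨p, hp, rfl⟩)
          · obtain ⟨i, hi, hit⟩ := hc1 C' hC'
            exact ⟨i.succ, ⟨i, hi, rfl⟩, hit⟩
          · obtain ⟨i, hi, hit⟩ := hc0 C' hC'
            exact ⟨i.succ, Set.mem_insert_of_mem _ ⟨i, hi, rfl⟩, hit⟩
          · refine ⟨p.1.succ, by simp, ?_⟩
            have := hp0 p hp
            rw [hP0true p hp] at this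
            exact this
      · -- a 0 = true, tail in R1
        obtain ⟨hp1, hc1⟩ := (hIff1 _).1 haR
        refine ⟨?_, ?_⟩
        · rintro q ⟨p, hp, rfl⟩
          exact hp1 p hp
        · rintro C ((⟨C', hC', rfl⟩ | ⟨C', hC', rfl⟩) | ⟨p, hp, rfl⟩)
          · obtain ⟨i, hi, hit⟩ := hc1 C' hC'
            exact ⟨i.succ, ⟨i, hi, rfl⟩, hit⟩
          · exact ⟨0, Set.mem_insert _ _, h0'⟩
          · exact ⟨0, by simp, h0'⟩
    · rintro ⟨hp, hc⟩
      have haR1 : (fun i => a i.succ) ∈ R1 := by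
        refine (hIff1 _).2 ⟨?_, ?_⟩
        · intro p hpp
          exact hp (p.1.succ, p.2) ⟨p, hpp, rfl⟩
        · intro C hC
          obtain ⟨i, hi, hit⟩ := hc (Fin.succ '' C) (Or.inl (Or.inl ⟨C, hC, rfl⟩))
          obtain ⟨j, hj, rfl⟩ := hi
          exact ⟨j, hj, hit⟩
      cases h0 : a 0 with
      | true => exact Or.inr ⟨h0, haR1⟩
      | false =>
        refine Or.inl ⟨h0, (hIff0 _).2 ⟨?_, ?_⟩⟩
        · intro p hpp
          obtain ⟨i, hi, hit⟩ := hc {0, p.1.succ} (Or.inr ⟨p, hpp, rfl⟩)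
          rcases hi with rfl | hi
          · rw [h0] at hit; exact absurd hit (by simp)
          · simp only [Set.mem_singleton_iff] at hi
            subst hi
            rw [hP0true p hpp]
            exact hit
        · intro C hC
          obtain ⟨i, hi, hit⟩ := hc (insert 0 (Fin.succ '' C))
            (Or.inl (Or.inr ⟨C, hC, rfl⟩))
          rcases hi with rfl | ⟨j, hj, rfl⟩
          · rw [h0] at hit; exact absurd hit (by simp)
          · exact ⟨j, hj, hit⟩
end

section
/- Let R_0, R_1 ⊆ {0,1}^r be Boolean relations such that R_1 is monotone and non-empty and R_0 is not a subset of R_1. Then the relation R_0 + R_1 3-simulates equality. -/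
section RelSumSimAux

open Finset

private lemma sum_map_flatMap {α β : Type} (g : β → ℕ) (f : α → List β) (l : List α) :
    ((l.flatMap f).map g).sum = (l.map fun a => ((f a).map g).sum).sum := by
  induction l with
  | nil => simp
  | cons a l ih => simp [ih]

private lemma sum_map_filter_le {α : Type} (g : α → ℕ) (p : α → Bool) (l : List α) :
    ((l.filter p).map g).sum ≤ (l.map g).sum := by
  induction l with
  | nil => simp
  | cons a l ih =>
    rw [List.filter_cons]
    by_cases h : p a
    · simp only [h, if_true, List.map_cons, List.sum_cons]
      omega
    · simp only [h, Bool.false_eq_true, if_false, List.map_cons, List.sum_cons]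
      omega

private lemma exists_pair {r : ℕ} (R0 R1 : BoolRel r) (hmono : MonotoneRel R1)
    (hne : R1.Nonempty) (hnsub : ¬ R0 ⊆ R1) :
    ∃ c b : Fin r → Bool, c ∈ R0 ∧ c ∉ R1 ∧ b ∈ R1 ∧ leTuple c b ∧
      (∃ i0 : Fin r, c i0 = false ∧ b i0 = true) ∧
      (∀ t, leTuple c t → leTuple t b → t ≠ c → t ≠ b → t ∉ R0 ∧ t ∉ R1) := by
  classical
  obtain ⟨a, ha0, ha1⟩ := Set.not_subset.mp hnsub
  set wt : (Fin r → Bool) → ℕ := fun t => (Finset.univ.filter fun i => t i = true).card with hwt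
  have hwt_lt : ∀ x y : Fin r → Bool, leTuple x y → x ≠ y → wt x < wt y := by
    intro x y hxy hne'
    have hsub : (Finset.univ.filter fun i => x i = true) ⊆
        (Finset.univ.filter fun i => y i = true) := by
      intro i hi
      rw [Finset.mem_filter] at hi ⊢
      exact ⟨hi.1, hxy i hi.2⟩
    have hne2 : (Finset.univ.filter fun i => x i = true) ≠
        (Finset.univ.filter fun i => y i = true) := by
      intro hEq
      apply hne'
      funext i
      rcases hx : x i with _ | _
      · rcases hy : y i with _ | _
        · rfl
        · have hmem : i ∈ Finset.univ.filter fun i => y i = true :=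
            Finset.mem_filter.mpr ⟨Finset.mem_univ _, hy⟩
          rw [← hEq, Finset.mem_filter] at hmem
          rw [hx] at hmem
          exact absurd hmem.2 (by simp)
      · exact (hxy i hx).symm
    exact Finset.card_lt_card (Finset.ssubset_iff_subset_ne.mpr ⟨hsub, hne2⟩)
  obtain ⟨cc, hccmem, hccmax⟩ :=
    Set.Finite.exists_maximalFor wt (R0 \ R1) (Set.toFinite _) ⟨a, ha0, ha1⟩
  have hcc0 : cc ∈ R0 := hccmem.1
  have hccne : cc ∉ R1 := hccmem.2
  obtain ⟨e, he⟩ := hne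
  have hone : (fun _ => true : Fin r → Bool) ∈ R1 := hmono e he _ (fun i _ => rfl)
  have honene : (fun _ => true : Fin r → Bool) ≠ cc := fun h => hccne (h ▸ hone)
  obtain ⟨bb, hbbmem, hbbmin⟩ :=
    Set.Finite.exists_minimalFor wt
      {t | leTuple cc t ∧ t ≠ cc ∧ (t ∈ R0 ∨ t ∈ R1)} (Set.toFinite _)
      ⟨(fun _ => true), fun i _ => rfl, honene, Or.inr hone⟩
  obtain ⟨hle_cb, hne_cb, hmem01⟩ := hbbmem
  have hbb1 : bb ∈ R1 := by
    rcases hmem01 with h0 | h1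
    · by_contra hbb1
      have hlt : wt cc < wt bb := hwt_lt _ _ hle_cb (Ne.symm hne_cb)
      have heq := hccmax (j := bb) ⟨h0, hbb1⟩ (le_of_lt hlt)
      omega
    · exact h1
  refine ⟨cc, bb, hcc0, hccne, hbb1, hle_cb, ?_, ?_⟩
  · have hex : ∃ i, cc i ≠ bb i := by
      by_contra hAll
      push_neg at hAll
      exact hne_cb (funext fun i => (hAll i).symm)
    obtain ⟨i, hi⟩ := hex
    refine ⟨i, ?_, ?_⟩
    · rcases hci : cc i with _ | _
      · rfl
      · rw [hci, hle_cb i hci] at hi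
        exact absurd rfl hi
    · rcases hbi : bb i with _ | _
      · rcases hci : cc i with _ | _
        · rw [hci, hbi] at hi
          exact absurd rfl hi
        · rw [hle_cb i hci] at hbi
          exact absurd hbi (by simp)
      · rfl
  · intro t hct htb htc htb2
    constructor
    · intro ht0
      have hlt : wt t < wt bb := hwt_lt _ _ htb htb2
      have heq := hbbmin (j := t) ⟨hct, htc, Or.inl ht0⟩ (le_of_lt hlt)
      omega
    · intro ht1
      have hlt : wt t < wt bb := hwt_lt _ _ htb htb2
      have heq := hbbmin (j := t) ⟨hct, htc, Or.inr ht1⟩ (le_of_lt hlt)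
      omega

private def xV (k m : ℕ) (j : Fin k) : Fin (k + m) :=
  ⟨(j : ℕ), Nat.lt_of_lt_of_le j.isLt (Nat.le_add_right k m)⟩

private def pV (r k : ℕ) (j : Fin k) (i : Fin r) : Fin (k + k * r) :=
  ⟨k + ((j : ℕ) * r + (i : ℕ)), by
    have hj : (j : ℕ) < k := j.isLt
    have hi : (i : ℕ) < r := i.isLt
    have h2 : ((j : ℕ) + 1) * r ≤ k * r := Nat.mul_le_mul_right r (by omega)
    have h3 : ((j : ℕ) + 1) * r = (j : ℕ) * r + r := by ring
    have h4 : (j : ℕ) * r + (i : ℕ) < k * r := by linarith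
    linarith⟩

private lemma xV_val {k m : ℕ} (j : Fin k) : ((xV k m j : Fin (k + m)) : ℕ) = (j : ℕ) := rfl

private lemma pV_val {r k : ℕ} (j : Fin k) (i : Fin r) :
    ((pV r k j i : Fin (k + k * r)) : ℕ) = k + ((j : ℕ) * r + (i : ℕ)) := rfl

private lemma enc_inj {r k : ℕ} {j j' : Fin k} {i i' : Fin r}
    (h : (j : ℕ) * r + (i : ℕ) = (j' : ℕ) * r + (i' : ℕ)) : j = j' ∧ i = i' := by
  have hi := i.isLt
  have hi' := i'.isLt
  have hjj : (j : ℕ) = (j' : ℕ) := by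
    rcases Nat.lt_trichotomy (j : ℕ) (j' : ℕ) with hl | he | hg
    · exfalso
      have h1 : ((j : ℕ) + 1) * r ≤ (j' : ℕ) * r := Nat.mul_le_mul_right r hl
      have h3 : ((j : ℕ) + 1) * r = (j : ℕ) * r + r := by ring
      linarith
    · exact he
    · exfalso
      have h1 : ((j' : ℕ) + 1) * r ≤ (j : ℕ) * r := Nat.mul_le_mul_right r hg
      have h3 : ((j' : ℕ) + 1) * r = (j' : ℕ) * r + r := by ring
      linarith
  refine ⟨Fin.ext hjj, Fin.ext ?_⟩
  rw [hjj] at h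
  exact Nat.add_left_cancel h

private lemma pV_inj {r k : ℕ} {j j' : Fin k} {i i' : Fin r}
    (h : pV r k j i = pV r k j' i') : j = j' ∧ i = i' := by
  have hval := congrArg Fin.val h
  rw [pV_val, pV_val] at hval
  exact enc_inj (Nat.add_left_cancel hval)

private lemma xV_ne_pV {r k : ℕ} (a : Fin k) (j : Fin k) (i : Fin r) :
    xV k (k * r) a ≠ pV r k j i := by
  intro h
  have hval := congrArg Fin.val h
  rw [xV_val, pV_val] at hval
  have h2 := a.isLt
  rw [hval] at h2
  exact absurd h2 (Nat.not_lt.mpr (Nat.le_add_right _ _))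

private lemma fin_add_one_ne {k : ℕ} [NeZero k] (hk : 2 ≤ k) (j : Fin k) : j + 1 ≠ j := by
  intro h
  have h3 := congrArg (fun z => z - j) h
  simp only [add_sub_cancel_left, sub_self] at h3
  have h4 := congrArg Fin.val h3
  rw [Fin.val_one', Fin.val_zero, Nat.mod_eq_of_lt (by omega : 1 < k)] at h4
  omega

private lemma decode {r k : ℕ} (hr : 0 < r) (v : Fin (k + k * r)) (hv : ¬ (v : ℕ) < k) :
    ∃ (j : Fin k) (i : Fin r), v = pV r k j i := by
  have hlt := v.isLt
  have hge : k ≤ (v : ℕ) := Nat.le_of_not_lt hv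
  have hnlt : (v : ℕ) - k < k * r := by
    have := hlt
    generalize k * r = M at *
    omega
  refine ⟨⟨((v : ℕ) - k) / r, ?_⟩, ⟨((v : ℕ) - k) % r, Nat.mod_lt _ hr⟩, ?_⟩
  · rw [Nat.div_lt_iff_lt_mul hr]
    exact hnlt
  · apply Fin.ext
    rw [pV_val]
    have h5 : ((v : ℕ) - k) / r * r + ((v : ℕ) - k) % r = (v : ℕ) - k := by
      rw [Nat.mul_comm]
      exact Nat.div_add_mod _ _
    simp only []
    rw [h5]
    omega

@[reducible] private def mainCC {r : ℕ} (R0 R1 : BoolRel r) (k : ℕ) [NeZero k] (i0 : Fin r) (j : Fin k) :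
    Constraint (Fin (k + k * r)) where
  arity := r + 1
  rel := relSum R0 R1
  scope := Fin.cases (xV k (k * r) j)
    (fun i => if i = i0 then xV k (k * r) (j + 1) else pV r k j i)

private def pinCC {V : Type} (val : Bool) (v : V) : Constraint V where
  arity := 1
  rel := if val then Rone else Rzero
  scope := fun _ => v

private def pinOK {r : ℕ} (c b : Fin r → Bool) (i0 : Fin r) (i : Fin r) : Bool :=
  (i == i0) || c i || !(b i)

private lemma pinOK_iff {r : ℕ} (c b : Fin r → Bool) (i0 : Fin r) (i : Fin r) :
    pinOK c b i0 i = true ↔ (i = i0 ∨ c i = true ∨ b i = false) := by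
  simp [pinOK, Bool.or_eq_true, Bool.not_eq_true', or_assoc]

private def instCC {r : ℕ} (R0 R1 : BoolRel r) (k : ℕ) [NeZero k] (c b : Fin r → Bool) (i0 : Fin r) :
    CSPInstance (Fin (k + k * r)) where
  constraints :=
    ((List.finRange k).map (mainCC R0 R1 k i0)) ++
      ((List.finRange k).flatMap fun j =>
        ((List.finRange r).filter (pinOK c b i0)).map fun i => pinCC (b i) (pV r k j i))

private def Tf {r : ℕ} (k : ℕ) [NeZero k] (i0 : Fin r) (j : Fin k) (σ : Fin (k + k * r) → Bool) :
    Fin r → Bool :=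
  fun i => σ (if i = i0 then xV k (k * r) (j + 1) else pV r k j i)

private lemma main_sat_iff {r : ℕ} (R0 R1 : BoolRel r) (k : ℕ) [NeZero k] (i0 : Fin r) (j : Fin k)
    (σ : Fin (k + k * r) → Bool) :
    (mainCC R0 R1 k i0 j).sat σ ↔
      ((σ (xV k (k * r) j) = false ∧ Tf k i0 j σ ∈ R0) ∨
       (σ (xV k (k * r) j) = true ∧ Tf k i0 j σ ∈ R1)) := by
  simp only [Constraint.sat, mainCC, relSum, Set.mem_setOf_eq, Fin.cases_zero, Fin.cases_succ, Tf]
  exact Iff.rfl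

private lemma mem_main {r : ℕ} (R0 R1 : BoolRel r) (k : ℕ) [NeZero k] (c b : Fin r → Bool) (i0 : Fin r)
    (j : Fin k) : mainCC R0 R1 k i0 j ∈ (instCC R0 R1 k c b i0).constraints := by
  simp only [instCC, List.mem_append, List.mem_map, List.mem_finRange, true_and]
  exact Or.inl ⟨j, rfl⟩

private lemma mem_pin {r : ℕ} (R0 R1 : BoolRel r) (k : ℕ) [NeZero k] (c b : Fin r → Bool) (i0 : Fin r)
    (j : Fin k) (i : Fin r) (h : pinOK c b i0 i = true) :
    pinCC (b i) (pV r k j i) ∈ (instCC R0 R1 k c b i0).constraints := by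
  simp only [instCC, List.mem_append, List.mem_map, List.mem_flatMap, List.mem_filter,
    List.mem_finRange, true_and]
  exact Or.inr ⟨j, i, h, rfl⟩

private lemma scope_cases {r : ℕ} (R0 R1 : BoolRel r) (k : ℕ) [NeZero k] (i0 : Fin r) (j : Fin k)
    (s : Fin (r + 1)) :
    (mainCC R0 R1 k i0 j).scope s = xV k (k * r) j ∨
    (mainCC R0 R1 k i0 j).scope s = xV k (k * r) (j + 1) ∨
    ∃ i : Fin r, (mainCC R0 R1 k i0 j).scope s = pV r k j i := by
  rcases Fin.eq_zero_or_eq_succ s with rfl | ⟨i, rfl⟩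
  · left
    simp [mainCC]
  · by_cases hii : i = i0
    · right; left
      simp [mainCC, hii]
    · right; right
      exact ⟨i, by simp [mainCC, hii]⟩

private lemma main_scope_inj {r : ℕ} (R0 R1 : BoolRel r) (k : ℕ) [NeZero k] (hk : 2 ≤ k) (i0 : Fin r)
    (j : Fin k) : Function.Injective (mainCC R0 R1 k i0 j).scope := by
  have hxx : ∀ a a' : Fin k, xV k (k * r) a = xV k (k * r) a' → a = a' := by
    intro a a' h
    have hval := congrArg Fin.val h
    exact Fin.ext hval
  intro s t h
  rcases Fin.eq_zero_or_eq_succ s with rfl | ⟨si, rfl⟩ <;>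
    rcases Fin.eq_zero_or_eq_succ t with rfl | ⟨ti, rfl⟩
  · rfl
  · exfalso
    simp only [mainCC, Fin.cases_zero, Fin.cases_succ] at h
    by_cases hti : ti = i0
    · rw [if_pos hti] at h
      exact fin_add_one_ne hk j ((hxx _ _ h).symm)
    · rw [if_neg hti] at h
      exact xV_ne_pV j j ti h
  · exfalso
    simp only [mainCC, Fin.cases_zero, Fin.cases_succ] at h
    by_cases hsi : si = i0
    · rw [if_pos hsi] at h
      exact fin_add_one_ne hk j (hxx _ _ h)
    · rw [if_neg hsi] at h
      exact xV_ne_pV j j si h.symm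
  · simp only [mainCC, Fin.cases_succ] at h
    by_cases hsi : si = i0 <;> by_cases hti : ti = i0
    · rw [hsi, hti]
    · rw [if_pos hsi, if_neg hti] at h
      exact absurd h (xV_ne_pV _ _ _)
    · rw [if_neg hsi, if_pos hti] at h
      exact absurd h.symm (xV_ne_pV _ _ _)
    · rw [if_neg hsi, if_neg hti] at h
      exact congrArg Fin.succ (pV_inj h).2

end RelSumSimAux
section RelSumSimAux2

private def decI (r k : ℕ) (hr : 0 < r) (v : Fin (k + k * r)) : Fin r :=
  ⟨((v : ℕ) - k) % r, Nat.mod_lt _ hr⟩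

private lemma decI_pV {r k : ℕ} (hr : 0 < r) (j : Fin k) (i : Fin r) :
    decI r k hr (pV r k j i) = i := by
  apply Fin.ext
  simp only [decI, pV]
  rw [Nat.add_sub_cancel_left, Nat.add_comm ((j : ℕ) * r) (i : ℕ),
    Nat.add_mul_mod_self_right, Nat.mod_eq_of_lt i.isLt]

private lemma pV_not_lt {r k : ℕ} (j : Fin k) (i : Fin r) : ¬ ((pV r k j i : ℕ) < k) := by
  rw [pV_val]
  exact Nat.not_lt.mpr (Nat.le_add_right _ _)

private def sig0 {r : ℕ} (k : ℕ) (hr : 0 < r) (c : Fin r → Bool) (i0 : Fin r)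
    (v : Fin (k + k * r)) : Bool :=
  if (v : ℕ) < k then false
  else if decI r k hr v = i0 then true else c (decI r k hr v)

private def sig1 {r : ℕ} (k : ℕ) (hr : 0 < r) (b : Fin r → Bool)
    (v : Fin (k + k * r)) : Bool :=
  if (v : ℕ) < k then true else b (decI r k hr v)

private lemma sig0_lt {r : ℕ} (k : ℕ) (hr : 0 < r) (c : Fin r → Bool) (i0 : Fin r)
    (v : Fin (k + k * r)) (h : (v : ℕ) < k) : sig0 k hr c i0 v = false := by
  simp [sig0, h]

private lemma sig1_lt {r : ℕ} (k : ℕ) (hr : 0 < r) (b : Fin r → Bool)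
    (v : Fin (k + k * r)) (h : (v : ℕ) < k) : sig1 k hr b v = true := by
  simp [sig1, h]

private lemma sig0_xV {r : ℕ} (k : ℕ) (hr : 0 < r) (c : Fin r → Bool) (i0 : Fin r)
    (j : Fin k) : sig0 k hr c i0 (xV k (k * r) j) = false :=
  sig0_lt k hr c i0 _ j.isLt

private lemma sig1_xV {r : ℕ} (k : ℕ) (hr : 0 < r) (b : Fin r → Bool)
    (j : Fin k) : sig1 k hr b (xV k (k * r) j) = true :=
  sig1_lt k hr b _ j.isLt

private lemma sig0_pV {r : ℕ} (k : ℕ) (hr : 0 < r) (c : Fin r → Bool) (i0 : Fin r)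
    (j : Fin k) (i : Fin r) :
    sig0 k hr c i0 (pV r k j i) = if i = i0 then true else c i := by
  simp only [sig0]
  rw [if_neg (pV_not_lt j i), decI_pV hr j i]

private lemma sig1_pV {r : ℕ} (k : ℕ) (hr : 0 < r) (b : Fin r → Bool)
    (j : Fin k) (i : Fin r) : sig1 k hr b (pV r k j i) = b i := by
  simp only [sig1]
  rw [if_neg (pV_not_lt j i), decI_pV hr j i]

private lemma deg_le {r : ℕ} (R0 R1 : BoolRel r) (c b : Fin r → Bool) (i0 : Fin r)
    (k : ℕ) [NeZero k] (hk : 2 ≤ k) (v : Fin (k + k * r)) :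
    varDegree (instCC R0 R1 k c b i0) v ≤ 2 := by
  classical
  have hr : 0 < r := i0.pos
  have hcard1 : ∀ j : Fin k,
      (Finset.univ.filter fun s => (mainCC R0 R1 k i0 j).scope s = v).card ≤ 1 := by
    intro j
    rw [Finset.card_le_one]
    intro s hs t ht
    rw [Finset.mem_filter] at hs ht
    exact main_scope_inj R0 R1 k hk i0 j (hs.2.trans ht.2.symm)
  have hcard0 : ∀ j : Fin k, (∀ s, (mainCC R0 R1 k i0 j).scope s ≠ v) →
      (Finset.univ.filter fun s => (mainCC R0 R1 k i0 j).scope s = v).card = 0 := by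
    intro j h
    rw [Finset.card_eq_zero, Finset.filter_eq_empty_iff]
    intro s _
    exact h s
  have hpincard : ∀ (val : Bool) (w : Fin (k + k * r)),
      (Finset.univ.filter fun s => (pinCC val w).scope s = v).card
        = if w = v then 1 else 0 := by
    intro val w
    by_cases h : w = v
    · rw [if_pos h]
      show (Finset.univ.filter fun _s : Fin 1 => w = v).card = 1
      rw [Finset.filter_const, if_pos h]
      simp
    · rw [if_neg h]
      show (Finset.univ.filter fun _s : Fin 1 => w = v).card = 0
      rw [Finset.filter_const, if_neg h]
      simp
  have hdeg : varDegree (instCC R0 R1 k c b i0) v =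
      (∑ j : Fin k, (Finset.univ.filter fun s => (mainCC R0 R1 k i0 j).scope s = v).card) +
      (∑ j : Fin k,
        ((((List.finRange r).filter (pinOK c b i0)).map fun i => pinCC (b i) (pV r k j i)).map
          fun cc => (Finset.univ.filter fun s => cc.scope s = v).card).sum) := by
    simp only [varDegree, instCC, List.map_append, List.sum_append, sum_map_flatMap,
      List.map_map, Fin.sum_univ_def, Function.comp_def]
  rw [hdeg]
  by_cases hv : (v : ℕ) < k
  · -- v is an x-variable; pins do not touch it
    set J : Fin k := ⟨(v : ℕ), hv⟩ with hJ
    have hmain_le : ∀ j : Fin k,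
        (Finset.univ.filter fun s => (mainCC R0 R1 k i0 j).scope s = v).card ≤
          ((if j = J then 1 else 0) + (if j = J - 1 then 1 else 0)) := by
      intro j
      by_cases h1 : j = J
      · rw [if_pos h1]
        exact (hcard1 j).trans (by split <;> omega)
      · by_cases h2 : j = J - 1
        · rw [if_neg h1, if_pos h2]
          exact hcard1 j
        · rw [if_neg h1, if_neg h2]
          have hz : ∀ s, (mainCC R0 R1 k i0 j).scope s ≠ v := by
            intro s
            rcases scope_cases R0 R1 k i0 j s with h | h | ⟨i, h⟩
            · rw [h]
              intro hEq
              have hval := congrArg Fin.val hEq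
              exact h1 (Fin.ext hval)
            · rw [h]
              intro hEq
              have hval := congrArg Fin.val hEq
              have hjJ : j + 1 = J := Fin.ext hval
              exact h2 (eq_sub_of_add_eq hjJ)
            · rw [h]
              intro hEq
              have hval := congrArg Fin.val hEq
              rw [pV_val] at hval
              have h4 : k ≤ (v : ℕ) := by
                rw [← hval]
                exact Nat.le_add_right _ _
              omega
          rw [hcard0 j hz]
    have hsum1 : (∑ j : Fin k,
        ((if j = J then (1 : ℕ) else 0) + (if j = J - 1 then 1 else 0))) = 2 := by
      rw [Finset.sum_add_distrib, Finset.sum_ite_eq' Finset.univ J (fun _ => (1 : ℕ)),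
        Finset.sum_ite_eq' Finset.univ (J - 1) (fun _ => (1 : ℕ))]
      simp
    have hm : (∑ j : Fin k,
        (Finset.univ.filter fun s => (mainCC R0 R1 k i0 j).scope s = v).card) ≤ 2 :=
      le_trans (Finset.sum_le_sum fun j _ => hmain_le j) (le_of_eq hsum1)
    have hp : (∑ j : Fin k,
        ((((List.finRange r).filter (pinOK c b i0)).map fun i => pinCC (b i) (pV r k j i)).map
          fun cc => (Finset.univ.filter fun s => cc.scope s = v).card).sum) = 0 := by
      apply Finset.sum_eq_zero
      intro j _
      apply List.sum_eq_zero
      intro x hx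
      rw [List.map_map] at hx
      obtain ⟨i, -, rfl⟩ := List.mem_map.mp hx
      simp only [Function.comp_def]
      rw [hpincard, if_neg]
      intro hEq
      have hval := congrArg Fin.val hEq
      rw [pV_val] at hval
      have h4 : k ≤ (v : ℕ) := by
        rw [← hval]
        exact Nat.le_add_right _ _
      omega
    omega
  · -- v is a tail-variable
    obtain ⟨J, I', hvP⟩ := decode hr v hv
    have hmain_le : ∀ j : Fin k,
        (Finset.univ.filter fun s => (mainCC R0 R1 k i0 j).scope s = v).card ≤
          (if j = J then 1 else 0) := by
      intro j
      by_cases h1 : j = J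
      · rw [if_pos h1]
        exact hcard1 j
      · rw [if_neg h1]
        have hz : ∀ s, (mainCC R0 R1 k i0 j).scope s ≠ v := by
          intro s
          rcases scope_cases R0 R1 k i0 j s with h | h | ⟨i, h⟩
          · rw [h, hvP]
            exact xV_ne_pV _ _ _
          · rw [h, hvP]
            exact xV_ne_pV _ _ _
          · rw [h, hvP]
            intro hEq
            exact h1 (pV_inj hEq).1
        rw [hcard0 j hz]
    have hm : (∑ j : Fin k,
        (Finset.univ.filter fun s => (mainCC R0 R1 k i0 j).scope s = v).card) ≤ 1 := by
      refine le_trans (Finset.sum_le_sum fun j _ => hmain_le j) ?_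
      rw [Finset.sum_ite_eq' Finset.univ J (fun _ => (1 : ℕ))]
      simp
    have hpin_le : ∀ j : Fin k,
        ((((List.finRange r).filter (pinOK c b i0)).map fun i => pinCC (b i) (pV r k j i)).map
          fun cc => (Finset.univ.filter fun s => cc.scope s = v).card).sum ≤
          (if j = J then 1 else 0) := by
      intro j
      by_cases h1 : j = J
      · rw [if_pos h1]
        subst h1
        rw [List.map_map]
        refine le_trans (sum_map_filter_le _ _ _) ?_
        rw [← Fin.sum_univ_def]
        have hterm : ∀ i : Fin r,
            ((fun cc => (Finset.univ.filter fun s => cc.scope s = v).card) ∘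
              (fun i => pinCC (b i) (pV r k j i))) i = if i = I' then 1 else 0 := by
          intro i
          simp only [Function.comp_def]
          rw [hpincard]
          by_cases h2 : i = I'
          · rw [if_pos h2, if_pos (by rw [h2, hvP])]
          · rw [if_neg h2, if_neg ?_]
            rw [hvP]
            intro hEq
            exact h2 (pV_inj hEq).2
        rw [Finset.sum_congr rfl (fun i _ => hterm i),
          Finset.sum_ite_eq' Finset.univ I' (fun _ => (1 : ℕ))]
        simp
      · rw [if_neg h1]
        apply le_of_eq
        apply List.sum_eq_zero
        intro x hx
        rw [List.map_map] at hx
        obtain ⟨i, -, rfl⟩ := List.mem_map.mp hx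
        simp only [Function.comp_def]
        rw [hpincard, if_neg]
        rw [hvP]
        intro hEq
        exact h1 (pV_inj hEq).1
    have hp : (∑ j : Fin k,
        ((((List.finRange r).filter (pinOK c b i0)).map fun i => pinCC (b i) (pV r k j i)).map
          fun cc => (Finset.univ.filter fun s => cc.scope s = v).card).sum) ≤ 1 := by
      refine le_trans (Finset.sum_le_sum fun j _ => hpin_le j) ?_
      rw [Finset.sum_ite_eq' Finset.univ J (fun _ => (1 : ℕ))]
      simp
    omega

end RelSumSimAux2
section RelSumSimAux3

open Fin.NatCast in
private lemma simK_aux {r : ℕ} (R0 R1 : BoolRel r) (c b : Fin r → Bool)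
    (hc0 : c ∈ R0) (hc1 : c ∉ R1) (hb1 : b ∈ R1) (hcb : leTuple c b)
    (i0 : Fin r) (hci0 : c i0 = false) (hbi0 : b i0 = true)
    (hmid : ∀ t, leTuple c t → leTuple t b → t ≠ c → t ≠ b → t ∉ R0 ∧ t ∉ R1)
    (k : ℕ) (hk : 2 ≤ k) :
    simulatesEqK {⟨r + 1, relSum R0 R1⟩} 3 k := by
  classical
  haveI : NeZero k := ⟨by omega⟩
  have hr : 0 < r := i0.pos
  -- pins force the pinned variables
  have hpin : ∀ (σ : Fin (k + k * r) → Bool), (instCC R0 R1 k c b i0).sat σ →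
      ∀ (j : Fin k) (i : Fin r), (i = i0 ∨ c i = true ∨ b i = false) →
        σ (pV r k j i) = b i := by
    intro σ hs j i hOK
    have hmem := hs _ (mem_pin R0 R1 k c b i0 j i ((pinOK_iff c b i0 i).mpr hOK))
    simp only [Constraint.sat, pinCC] at hmem
    rcases hbv : b i with _ | _
    · rw [hbv] at hmem
      exact hmem
    · rw [hbv] at hmem
      exact hmem
  have hmainsat : ∀ (σ : Fin (k + k * r) → Bool), (instCC R0 R1 k c b i0).sat σ →
      ∀ j : Fin k,
        (σ (xV k (k * r) j) = false ∧ Tf k i0 j σ ∈ R0) ∨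
        (σ (xV k (k * r) j) = true ∧ Tf k i0 j σ ∈ R1) := by
    intro σ hs j
    have h := hs _ (mem_main R0 R1 k c b i0 j)
    rwa [main_sat_iff] at h
  -- the tail tuple is either c or b
  have hTcb : ∀ (σ : Fin (k + k * r) → Bool), (instCC R0 R1 k c b i0).sat σ →
      ∀ j : Fin k, Tf k i0 j σ = c ∨ Tf k i0 j σ = b := by
    intro σ hs j
    have hTle1 : leTuple c (Tf k i0 j σ) := by
      intro i hci
      have hii : i ≠ i0 := by
        intro hh
        rw [hh, hci0] at hci
        exact Bool.noConfusion hci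
      simp only [Tf, if_neg hii]
      rw [hpin σ hs j i (Or.inr (Or.inl hci))]
      exact hcb i hci
    have hTle2 : leTuple (Tf k i0 j σ) b := by
      intro i hti
      by_cases hii : i = i0
      · rw [hii]
        exact hbi0
      · rcases hbv : b i with _ | _
        · exfalso
          have hp := hpin σ hs j i (Or.inr (Or.inr hbv))
          simp only [Tf, if_neg hii] at hti
          rw [hp, hbv] at hti
          exact Bool.noConfusion hti
        · rfl
    by_cases h1 : Tf k i0 j σ = c
    · exact Or.inl h1
    by_cases h2 : Tf k i0 j σ = b
    · exact Or.inr h2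
    exfalso
    have hmd := hmid _ hTle1 hTle2 h1 h2
    rcases hmainsat σ hs j with ⟨_, hR⟩ | ⟨_, hR⟩
    · exact hmd.1 hR
    · exact hmd.2 hR
  -- if the head is true, the tail tuple is b
  have hTb' : ∀ (σ : Fin (k + k * r) → Bool), (instCC R0 R1 k c b i0).sat σ →
      ∀ j : Fin k, σ (xV k (k * r) j) = true → Tf k i0 j σ = b := by
    intro σ hs j hj
    rcases hmainsat σ hs j with ⟨h0, _⟩ | ⟨_, hR1⟩
    · rw [hj] at h0
      exact absurd h0 (by simp)
    · rcases hTcb σ hs j with hc' | hb'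
      · rw [hc'] at hR1
        exact absurd hR1 hc1
      · exact hb'
  have hstep : ∀ (σ : Fin (k + k * r) → Bool), (instCC R0 R1 k c b i0).sat σ →
      ∀ j : Fin k, σ (xV k (k * r) j) = true → σ (xV k (k * r) (j + 1)) = true := by
    intro σ hs j hj
    have h := congrFun (hTb' σ hs j hj) i0
    simp [Tf] at h
    rw [h, hbi0]
  -- both canonical assignments satisfy the instance
  have hsat0 : (instCC R0 R1 k c b i0).sat (sig0 k hr c i0) := by
    intro cc hcc
    simp only [instCC, List.mem_append, List.mem_map, List.mem_flatMap, List.mem_filter,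
      List.mem_finRange, true_and] at hcc
    rcases hcc with ⟨j, rfl⟩ | ⟨j, i, hOK, rfl⟩
    · rw [main_sat_iff]
      left
      refine ⟨sig0_xV k hr c i0 j, ?_⟩
      have hTfc : Tf k i0 j (sig0 k hr c i0) = c := by
        funext i
        by_cases hii : i = i0
        · simp only [Tf, if_pos hii]
          rw [sig0_xV, hii, hci0]
        · simp only [Tf, if_neg hii]
          rw [sig0_pV, if_neg hii]
      rw [hTfc]
      exact hc0
    · have hOK' := (pinOK_iff c b i0 i).mp hOK
      have hval : sig0 k hr c i0 (pV r k j i) = b i := by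
        rw [sig0_pV]
        rcases hOK' with h | h | h
        · rw [if_pos h, h, hbi0]
        · have hii : i ≠ i0 := by
            intro hh
            rw [hh, hci0] at h
            exact Bool.noConfusion h
          rw [if_neg hii, h, hcb i h]
        · have hii : i ≠ i0 := by
            intro hh
            rw [hh, hbi0] at h
            exact Bool.noConfusion h
          rw [if_neg hii, h]
          rcases hcv : c i with _ | _
          · rfl
          · rw [hcb i hcv] at h
            exact Bool.noConfusion h
      rcases hbv : b i with _ | _
      · rw [hbv] at hval
        simp only [Constraint.sat, pinCC, hbv, Bool.false_eq_true, if_false, Rzero,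
          Set.mem_setOf_eq]
        exact hval
      · rw [hbv] at hval
        simp only [Constraint.sat, pinCC, hbv, if_true, Rone, Set.mem_setOf_eq]
        exact hval
  have hsat1 : (instCC R0 R1 k c b i0).sat (sig1 k hr b) := by
    intro cc hcc
    simp only [instCC, List.mem_append, List.mem_map, List.mem_flatMap, List.mem_filter,
      List.mem_finRange, true_and] at hcc
    rcases hcc with ⟨j, rfl⟩ | ⟨j, i, hOK, rfl⟩
    · rw [main_sat_iff]
      right
      refine ⟨sig1_xV k hr b j, ?_⟩
      have hTfb : Tf k i0 j (sig1 k hr b) = b := by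
        funext i
        by_cases hii : i = i0
        · simp only [Tf, if_pos hii]
          rw [sig1_xV, hii, hbi0]
        · simp only [Tf, if_neg hii]
          rw [sig1_pV]
      rw [hTfb]
      exact hb1
    · have hval : sig1 k hr b (pV r k j i) = b i := sig1_pV k hr b j i
      rcases hbv : b i with _ | _
      · rw [hbv] at hval
        simp only [Constraint.sat, pinCC, hbv, Bool.false_eq_true, if_false, Rzero,
          Set.mem_setOf_eq]
        exact hval
      · rw [hbv] at hval
        simp only [Constraint.sat, pinCC, hbv, if_true, Rone, Set.mem_setOf_eq]
        exact hval
  -- characterization of all satisfying assignments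
  have hchar : ∀ (σ : Fin (k + k * r) → Bool), (instCC R0 R1 k c b i0).sat σ →
      σ = sig0 k hr c i0 ∨ σ = sig1 k hr b := by
    intro σ hs
    by_cases hall : ∀ j : Fin k, σ (xV k (k * r) j) = false
    · left
      funext v
      by_cases hv : (v : ℕ) < k
      · have hxv : v = xV k (k * r) ⟨(v : ℕ), hv⟩ := Fin.ext rfl
        rw [hxv, hall ⟨(v : ℕ), hv⟩, sig0_xV]
      · obtain ⟨J, I', hvP⟩ := decode hr v hv
        by_cases hI : I' = i0
        · rw [hvP, hI, hpin σ hs J i0 (Or.inl rfl), sig0_pV, if_pos rfl, hbi0]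
        · have hTc : Tf k i0 J σ = c := by
            rcases hTcb σ hs J with h | h
            · exact h
            · exfalso
              have h2 := congrFun h i0
              simp [Tf] at h2
              rw [hall (J + 1), hbi0] at h2
              exact Bool.noConfusion h2
          have h2 := congrFun hTc I'
          simp only [Tf, if_neg hI] at h2
          rw [hvP, h2, sig0_pV, if_neg hI]
    · right
      push_neg at hall
      obtain ⟨j₀, hj₀⟩ := hall
      have hj₀true : σ (xV k (k * r) j₀) = true := by
        rcases hb0 : σ (xV k (k * r) j₀) with _ | _
        · exact absurd hb0 hj₀
        · rfl
      have hallT : ∀ j : Fin k, σ (xV k (k * r) j) = true := by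
        have hkey : ∀ n : ℕ, σ (xV k (k * r) (j₀ + (n : Fin k))) = true := by
          intro n
          induction n with
          | zero => simpa using hj₀true
          | succ m ih =>
            have hcast : ((m + 1 : ℕ) : Fin k) = ((m : ℕ) : Fin k) + 1 := by
              push_cast
              ring
            rw [hcast, ← add_assoc]
            exact hstep σ hs _ ih
        intro j
        have h := hkey ((j - j₀ : Fin k) : ℕ)
        rw [Fin.cast_val_eq_self] at h
        rwa [show j₀ + (j - j₀) = j from by abel] at h
      funext v
      by_cases hv : (v : ℕ) < k
      · have hxv : v = xV k (k * r) ⟨(v : ℕ), hv⟩ := Fin.ext rfl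
        rw [hxv, hallT ⟨(v : ℕ), hv⟩, sig1_xV]
      · obtain ⟨J, I', hvP⟩ := decode hr v hv
        by_cases hI : I' = i0
        · rw [hvP, hI, hpin σ hs J i0 (Or.inl rfl), sig1_pV]
        · have hTb := hTb' σ hs J (hallT J)
          have h2 := congrFun hTb I'
          simp only [Tf, if_neg hI] at h2
          rw [hvP, h2, sig1_pV]
  -- assemble
  refine ⟨k + k * r, Nat.le_add_right k (k * r), instCC R0 R1 k c b i0, ?_, ?_, ?_, 1,
    le_refl 1, ?_, ?_, ?_⟩
  · -- over the language
    intro cc hcc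
    simp only [instCC, List.mem_append, List.mem_map, List.mem_flatMap, List.mem_filter,
      List.mem_finRange, true_and] at hcc
    rcases hcc with ⟨j, rfl⟩ | ⟨j, i, hOK, rfl⟩
    · exact Set.mem_union_left _ rfl
    · rcases hbv : b i with _ | _
      · refine Set.mem_union_right _ ?_
        simp [pinCC, pinLang]
      · refine Set.mem_union_right _ ?_
        simp [pinCC, pinLang]
  · intro v
    exact le_trans (deg_le R0 R1 c b i0 k hk v) (by omega)
  · intro v _
    exact le_trans (deg_le R0 R1 c b i0 k hk v) (by omega)
  · -- all-false class
    have hset : {σ : Fin (k + k * r) → Bool |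
        (instCC R0 R1 k c b i0).sat σ ∧ ∀ v : Fin (k + k * r), (v : ℕ) < k → σ v = false}
        = {sig0 k hr c i0} := by
      apply Set.eq_singleton_iff_unique_mem.mpr
      constructor
      · exact ⟨hsat0, fun v hv => sig0_lt k hr c i0 v hv⟩
      · rintro σ ⟨hs, hfalse⟩
        rcases hchar σ hs with h | h
        · exact h
        · exfalso
          have h0 : ((xV k (k * r) (0 : Fin k) : Fin (k + k * r)) : ℕ) < k := (0 : Fin k).isLt
          have hf := hfalse _ h0
          rw [h, sig1_lt k hr b _ h0] at hf
          exact Bool.noConfusion hf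
    rw [hset, Nat.card_coe_set_eq, Set.ncard_singleton]
  · -- all-true class
    have hset : {σ : Fin (k + k * r) → Bool |
        (instCC R0 R1 k c b i0).sat σ ∧ ∀ v : Fin (k + k * r), (v : ℕ) < k → σ v = true}
        = {sig1 k hr b} := by
      apply Set.eq_singleton_iff_unique_mem.mpr
      constructor
      · exact ⟨hsat1, fun v hv => sig1_lt k hr b v hv⟩
      · rintro σ ⟨hs, htrue⟩
        rcases hchar σ hs with h | h
        · exfalso
          have h0 : ((xV k (k * r) (0 : Fin k) : Fin (k + k * r)) : ℕ) < k := (0 : Fin k).isLt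
          have hf := htrue _ h0
          rw [h, sig0_lt k hr c i0 _ h0] at hf
          exact Bool.noConfusion hf
        · exact h
    rw [hset, Nat.card_coe_set_eq, Set.ncard_singleton]
  · -- dichotomy
    intro σ hs
    rcases hchar σ hs with rfl | rfl
    · left
      intro v hv
      exact sig0_lt k hr c i0 v hv
    · right
      intro v hv
      exact sig1_lt k hr b v hv

end RelSumSimAux3

/-- If `R₁` is monotone and non-empty and `R₀ ⊄ R₁`, then `R₀ + R₁` 3-simulates equality. -/
theorem relSum_simulates_equality_of_not_subset (r : ℕ) (R0 R1 : BoolRel r)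
    (hmono : MonotoneRel R1) (hne : R1.Nonempty) (hnsub : ¬ R0 ⊆ R1) :
    relSimulatesEq (relSum R0 R1) 3 := by
  obtain ⟨c, b, hc0, hc1, hb1, hcb, ⟨i0, hci0, hbi0⟩, hmid⟩ :=
    exists_pair R0 R1 hmono hne hnsub
  intro k hk
  exact simK_aux R0 R1 c b hc0 hc1 hb1 hcb i0 hci0 hbi0 hmid k hk
end
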